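/- arXiv:math/0202231 — 5 statements merged into one kernel-verified Lean document; each statement's English description precedes it below -/
import Mathlib

section
/- For every r ≥ 2 and every n ≥ r, any r-edge-coloring of the complete r-uniform hypergraph K_n^r contains a color class whose induced subhypergraph is spanning and connected. In particular f_k(K_n^r) = 1 for all k ≤ r. -/
/-- The "intersection graph on vertices" of the color class `i` of an edge
coloring `c` of the complete `r`-uniform hypergraph `K_n^r`:
two distinct vertices are adjacent iff some `r`-edge of color `i`
contains both.  Its connected components containing an edge coincide with
the components of the color class of the hypergraph. -/
def hColorClass (r : ℕ) {n k : ℕ} (c : Finset (Fin n) → Fin k) (i : Fin k) :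
    SimpleGraph (Fin n) where
  Adj u v := u ≠ v ∧ ∃ e : Finset (Fin n), e.card = r ∧ c e = i ∧ u ∈ e ∧ v ∈ e
  symm := by
    constructor
    rintro u v ⟨h1, e, h2, h3, h4, h5⟩
    exact ⟨h1.symm, e, h2, h3, h5, h4⟩
  loopless := by
    constructor
    intro u h
    exact h.1 rfl

/-- The number of connected components containing at least one edge. -/
noncomputable def numEdgeComps {n : ℕ} (G : SimpleGraph (Fin n)) : ℕ :=
  Nat.card {C : G.ConnectedComponent //
    ∃ u v : Fin n, G.Adj u v ∧ G.connectedComponentMk u = C}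

/-- Color `i` is used on some `r`-edge. -/
def hUsed (r : ℕ) {n k : ℕ} (c : Finset (Fin n) → Fin k) (i : Fin k) : Prop :=
  ∃ e : Finset (Fin n), e.card = r ∧ c e = i

/-- The minimum, over used colors, of the number of components of the
corresponding color class. -/
noncomputable def hMinComps (r : ℕ) {n k : ℕ} (c : Finset (Fin n) → Fin k) : ℕ :=
  sInf ((fun i => numEdgeComps (hColorClass r c i)) '' {i | hUsed r c i})

/-- `f_k(K_n^r)`: the maximum over `k`-edge-colorings of `K_n^r` of the minimum,
over used colors, of the number of components of the color class. -/
noncomputable def fHyper (n r k : ℕ) : ℕ :=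
  sSup (Set.range fun c : Finset (Fin n) → Fin k => hMinComps r c)

/-- `S` crosses the bipartition `(A, Aᶜ)`. -/
def HCrosses {n : ℕ} (S : Finset (Fin n)) (A : Set (Fin n)) : Prop :=
  (∃ x ∈ S, x ∈ A) ∧ (∃ y ∈ S, y ∉ A)

lemma hCrosses_mono {n : ℕ} {S T : Finset (Fin n)} {A : Set (Fin n)}
    (hST : S ⊆ T) (h : HCrosses S A) : HCrosses T A := by
  obtain ⟨⟨x, hx, hxA⟩, ⟨y, hy, hyA⟩⟩ := h
  exact ⟨⟨x, hST hx, hxA⟩, ⟨y, hST hy, hyA⟩⟩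

/-- Two nontrivial bipartitions can be crossed by a two-element set. -/
lemma hCross_two {n : ℕ} (A B : Set (Fin n)) (hA : A.Nonempty) (hA' : Aᶜ.Nonempty)
    (hB : B.Nonempty) (hB' : Bᶜ.Nonempty) :
    ∃ S : Finset (Fin n), S.card = 2 ∧ HCrosses S A ∧ HCrosses S B := by
  by_cases h1 : (A ∩ B).Nonempty
  · by_cases h2 : (Aᶜ ∩ Bᶜ).Nonempty
    · obtain ⟨x, hxA, hxB⟩ := h1
      obtain ⟨y, hyA, hyB⟩ := h2
      have hxy : x ≠ y := fun h => hyA (h ▸ hxA)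
      refine ⟨{x, y}, Finset.card_pair hxy, ?_, ?_⟩
      · exact ⟨⟨x, by simp, hxA⟩, ⟨y, by simp, hyA⟩⟩
      · exact ⟨⟨x, by simp, hxB⟩, ⟨y, by simp, hyB⟩⟩
    · -- Aᶜ ∩ Bᶜ = ∅, so Aᶜ ⊆ B and Bᶜ ⊆ A
      rw [Set.not_nonempty_iff_eq_empty] at h2
      obtain ⟨y, hy⟩ := hA'
      obtain ⟨z, hz⟩ := hB'
      have hyB : y ∈ B := by
        by_contra hc
        exact absurd (Set.eq_empty_iff_forall_notMem.mp h2 y ⟨hy, hc⟩) (fun h => h)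
      have hzA : z ∈ A := by
        by_contra hc
        exact absurd (Set.eq_empty_iff_forall_notMem.mp h2 z ⟨hc, hz⟩) (fun h => h)
      have hyz : z ≠ y := fun h => hy (h ▸ hzA)
      refine ⟨{z, y}, Finset.card_pair hyz, ?_, ?_⟩
      · exact ⟨⟨z, by simp, hzA⟩, ⟨y, by simp, hy⟩⟩
      · exact ⟨⟨y, by simp, hyB⟩, ⟨z, by simp, hz⟩⟩
  · -- A ∩ B = ∅
    rw [Set.not_nonempty_iff_eq_empty] at h1
    obtain ⟨z, hz⟩ := hA
    obtain ⟨y, hy⟩ := hB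
    have hzB : z ∉ B := fun hc => Set.eq_empty_iff_forall_notMem.mp h1 z ⟨hz, hc⟩
    have hyA : y ∉ A := fun hc => Set.eq_empty_iff_forall_notMem.mp h1 y ⟨hc, hy⟩
    have hzy : z ≠ y := fun h => hyA (h ▸ hz)
    refine ⟨{z, y}, Finset.card_pair hzy, ?_, ?_⟩
    · exact ⟨⟨z, by simp, hz⟩, ⟨y, by simp, hyA⟩⟩
    · exact ⟨⟨y, by simp, hy⟩, ⟨z, by simp, hzB⟩⟩

/-- Given `m ≥ 2` nontrivial bipartitions, there is a set of at most `m` points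
crossing all of them. -/
lemma hCross_many {n r : ℕ} (A : Fin r → Set (Fin n))
    (hA : ∀ i, (A i).Nonempty) (hA' : ∀ i, (A i)ᶜ.Nonempty)
    (m : ℕ) (hm : 2 ≤ m) (hmr : m ≤ r) :
    ∃ S : Finset (Fin n), S.card ≤ m ∧ S.Nonempty ∧
      ∀ i : Fin r, (i : ℕ) < m → HCrosses S (A i) := by
  induction m, hm using Nat.le_induction with
  | base =>
    have h0 : (0 : ℕ) < r := by omega
    have h1 : (1 : ℕ) < r := by omega
    obtain ⟨S, hScard, hSA, hSB⟩ :=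
      hCross_two (A ⟨0, h0⟩) (A ⟨1, h1⟩) (hA _) (hA' _) (hA _) (hA' _)
    refine ⟨S, le_of_eq hScard, Finset.card_pos.mp (by omega), ?_⟩
    intro i hi
    interval_cases h : (i : ℕ)
    · convert hSA using 2; exact Fin.ext h
    · convert hSB using 2; exact Fin.ext h
  | succ m hm2 ih =>
    obtain ⟨S, hScard, hSne, hScross⟩ := ih (by omega)
    have hmr' : m < r := by omega
    set j : Fin r := ⟨m, hmr'⟩ with hj
    by_cases hc : HCrosses S (A j)
    · refine ⟨S, by omega, hSne, fun i hi => ?_⟩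
      rcases Nat.lt_succ_iff_lt_or_eq.mp hi with h | h
      · exact hScross i h
      · have : i = j := Fin.ext h
        rw [this]; exact hc
    · rw [HCrosses, not_and_or] at hc
      rcases hc with hc | hc
      · push_neg at hc
        obtain ⟨a, ha⟩ := hA j
        have haS : a ∉ S := fun h => hc a h ha
        refine ⟨insert a S, ?_, ⟨a, Finset.mem_insert_self a S⟩, ?_⟩
        · rw [Finset.card_insert_of_notMem haS]; omega
        · intro i hi
          rcases Nat.lt_succ_iff_lt_or_eq.mp hi with h | h
          · exact hCrosses_mono (Finset.subset_insert a S) (hScross i h)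
          · have hij : i = j := Fin.ext h
            obtain ⟨y, hy⟩ := hSne
            rw [hij]
            exact ⟨⟨a, Finset.mem_insert_self a S, ha⟩,
              ⟨y, Finset.mem_insert_of_mem hy, hc y hy⟩⟩
      · push_neg at hc
        obtain ⟨a, ha⟩ := hA' j
        have haS : a ∉ S := fun h => ha (hc a h)
        refine ⟨insert a S, ?_, ⟨a, Finset.mem_insert_self a S⟩, ?_⟩
        · rw [Finset.card_insert_of_notMem haS]; omega
        · intro i hi
          rcases Nat.lt_succ_iff_lt_or_eq.mp hi with h | h
          · exact hCrosses_mono (Finset.subset_insert a S) (hScross i h)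
          · have hij : i = j := Fin.ext h
            obtain ⟨y, hy⟩ := hSne
            rw [hij]
            exact ⟨⟨y, Finset.mem_insert_of_mem hy, hc y hy⟩,
              ⟨a, Finset.mem_insert_self a S, ha⟩⟩

/-- The main combinatorial lemma: some color class is connected. -/
lemma hExists_connected (r n : ℕ) (hr : 2 ≤ r) (hn : r ≤ n)
    (c : Finset (Fin n) → Fin r) : ∃ i : Fin r, (hColorClass r c i).Connected := by
  by_contra h
  push_neg at h
  have hn2 : 2 ≤ n := le_trans hr hn
  haveI : Nonempty (Fin n) := ⟨⟨0, by omega⟩⟩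
  have h' : ∀ i : Fin r, ∃ u v : Fin n, ¬(hColorClass r c i).Reachable u v := by
    intro i
    by_contra hc
    push_neg at hc
    exact h i ⟨fun u v => hc u v⟩
  choose u v huv using h'
  set A : Fin r → Set (Fin n) :=
    fun i => {w | (hColorClass r c i).Reachable (u i) w} with hAdef
  have hA : ∀ i, (A i).Nonempty := fun i => ⟨u i, SimpleGraph.Reachable.refl _⟩
  have hA' : ∀ i, (A i)ᶜ.Nonempty := fun i => ⟨v i, huv i⟩
  -- every edge of color i stays on one side of A i
  have hkey : ∀ i : Fin r, ∀ e : Finset (Fin n), e.card = r → c e = i →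
      ∀ x ∈ e, ∀ y ∈ e, x ∈ A i → y ∈ A i := by
    intro i e hcard hce x hx y hy hxA
    by_cases hxy : x = y
    · exact hxy ▸ hxA
    · have hadj : (hColorClass r c i).Adj x y := ⟨hxy, e, hcard, hce, hx, hy⟩
      exact SimpleGraph.Reachable.trans hxA hadj.reachable
  obtain ⟨S, hScard, _, hScross⟩ := hCross_many A hA hA' r hr le_rfl
  obtain ⟨e, hSe, _, hecard⟩ :=
    Finset.exists_subsuperset_card_eq (Finset.subset_univ S) hScard
      (by simpa using hn)
  obtain ⟨⟨x, hxe, hxA⟩, ⟨y, hye, hyA⟩⟩ :=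
    hCrosses_mono hSe (hScross (c e) (c e).isLt)
  exact hyA (hkey (c e) e hecard rfl x hxe y hye hxA)

lemma hNumEdgeComps_eq_one {n : ℕ} (G : SimpleGraph (Fin n)) (hG : G.Connected)
    (hadj : ∃ u v : Fin n, G.Adj u v) : numEdgeComps G = 1 := by
  rw [numEdgeComps, Nat.card_eq_one_iff_unique]
  obtain ⟨u, v, huv⟩ := hadj
  haveI := hG.preconnected.subsingleton_connectedComponent
  exact ⟨⟨fun a b => Subtype.ext (Subsingleton.elim _ _)⟩, ⟨⟨_, u, v, huv, rfl⟩⟩⟩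

lemma hNumEdgeComps_pos {n : ℕ} (G : SimpleGraph (Fin n))
    (hadj : ∃ u v : Fin n, G.Adj u v) : 1 ≤ numEdgeComps G := by
  obtain ⟨u, v, huv⟩ := hadj
  haveI : Finite G.ConnectedComponent :=
    Finite.of_surjective G.connectedComponentMk Quot.mk_surjective
  haveI : Nonempty {C : G.ConnectedComponent //
      ∃ u v : Fin n, G.Adj u v ∧ G.connectedComponentMk u = C} :=
    ⟨⟨_, u, v, huv, rfl⟩⟩
  exact Nat.one_le_iff_ne_zero.mpr (Nat.card_ne_zero.mpr ⟨‹_›, inferInstance⟩)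

/-- For `r ≥ 2` and `n ≥ r`, any `r`-edge-coloring of `K_n^r` has a color
class whose induced subhypergraph is spanning and connected; in particular
`f_k(K_n^r) = 1` for all `1 ≤ k ≤ r`. -/
theorem hyper_r_coloring_connected (r n : ℕ) (hr : 2 ≤ r) (hn : r ≤ n) :
    (∀ c : Finset (Fin n) → Fin r, ∃ i : Fin r, (hColorClass r c i).Connected) ∧
    (∀ k : ℕ, 1 ≤ k → k ≤ r → fHyper n r k = 1) := by
  refine ⟨hExists_connected r n hr hn, ?_⟩
  intro k hk1 hkr
  have hn2 : 2 ≤ n := hr.trans hn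
  haveI : Nonempty (Fin k) := ⟨⟨0, hk1⟩⟩
  have key : ∀ c : Finset (Fin n) → Fin k, hMinComps r c = 1 := by
    intro c
    set c' : Finset (Fin n) → Fin r := fun e => Fin.castLE hkr (c e) with hc'def
    obtain ⟨j, hj⟩ := hExists_connected r n hr hn c'
    -- extract an adjacency of the connected color class
    have hadj : ∃ u v : Fin n, (hColorClass r c' j).Adj u v := by
      have hab : (⟨0, by omega⟩ : Fin n) ≠ ⟨1, by omega⟩ := by
        simp [Fin.ext_iff]
      obtain ⟨w⟩ := hj.preconnected ⟨0, by omega⟩ ⟨1, by omega⟩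
      cases w with
      | cons h p => exact ⟨_, _, h⟩
    obtain ⟨u, v, huv⟩ := hadj
    obtain ⟨hne, e, hecard, hce, hue, hve⟩ := huv
    set i : Fin k := c e with hidef
    have hGeq : hColorClass r c i = hColorClass r c' j := by
      have hiff : ∀ e' : Finset (Fin n), c e' = i ↔ c' e' = j := by
        intro e'
        rw [← hce]
        constructor
        · intro h; simp only [hc'def]; rw [h]
        · intro h
          simp only [hc'def] at h
          exact Fin.castLE_injective hkr h
      ext a b
      constructor
      · rintro ⟨h1, f, h2, h3, h4, h5⟩
        exact ⟨h1, f, h2, (hiff f).mp h3, h4, h5⟩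
      · rintro ⟨h1, f, h2, h3, h4, h5⟩
        exact ⟨h1, f, h2, (hiff f).mpr h3, h4, h5⟩
    have h1mem : (1 : ℕ) ∈
        ((fun i => numEdgeComps (hColorClass r c i)) '' {i | hUsed r c i}) := by
      refine ⟨i, ⟨e, hecard, rfl⟩, ?_⟩
      show numEdgeComps (hColorClass r c i) = 1
      rw [hGeq]
      exact hNumEdgeComps_eq_one _ hj ⟨u, v, ⟨hne, e, hecard, hce, hue, hve⟩⟩
    have hlb : ∀ x ∈ ((fun i => numEdgeComps (hColorClass r c i)) '' {i | hUsed r c i}),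
        1 ≤ x := by
      rintro x ⟨i', ⟨e', he'card, he'col⟩, rfl⟩
      obtain ⟨a, ha, b, hb, hab⟩ := Finset.one_lt_card.mp (by omega : 1 < e'.card)
      exact hNumEdgeComps_pos _ ⟨a, b, hab, e', he'card, he'col, ha, hb⟩
    rw [hMinComps]
    exact le_antisymm (Nat.sInf_le h1mem) (le_csInf ⟨1, h1mem⟩ hlb)
  have hfun : (fun c : Finset (Fin n) → Fin k => hMinComps r c) = fun _ => 1 :=
    funext key
  rw [fHyper, hfun, Set.range_const, csSup_singleton]
end

section
/- f_3(K_5) = 2. -/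
/-- The simple graph on `Fin n` induced by the color class `i` of the edge
coloring `c` of the complete graph `K_n`. -/
def colorClass {n k : ℕ} (c : Sym2 (Fin n) → Fin k) (i : Fin k) :
    SimpleGraph (Fin n) where
  Adj u v := u ≠ v ∧ c s(u, v) = i
  symm := by
    constructor
    intro u v h
    exact ⟨h.1.symm, by rw [Sym2.eq_swap]; exact h.2⟩
  loopless := by
    constructor
    intro u h
    exact h.1 rfl

/-- Color `i` is used on some edge of `K_n`. -/
def usedColor {n k : ℕ} (c : Sym2 (Fin n) → Fin k) (i : Fin k) : Prop :=
  ∃ u v : Fin n, u ≠ v ∧ c s(u, v) = i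

/-- The minimum, over used colors, of the number of components of the
corresponding color class. -/
noncomputable def minComps {n k : ℕ} (c : Sym2 (Fin n) → Fin k) : ℕ :=
  sInf ((fun i => numEdgeComps (colorClass c i)) '' {i | usedColor c i})

/-- `f_k(K_n)`: the maximum over `k`-edge-colorings of `K_n` of the minimum,
over used colors, of the number of components of the color class. -/
noncomputable def fGraph (n k : ℕ) : ℕ :=
  sSup (Set.range fun c : Sym2 (Fin n) → Fin k => minComps c)

/- ### Auxiliary material -/

def table : ℕ → ℕ → Fin 3
| 0, 1 => 0 | 2, 3 => 0 | 2, 4 => 0 | 3, 4 => 0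
| 0, 2 => 1 | 0, 3 => 1 | 1, 4 => 1
| _, _ => 2

/-- The extremal coloring of `K_5`. -/
def c0 : Sym2 (Fin 5) → Fin 3 :=
  Sym2.lift ⟨fun x y => table (min x.val y.val) (max x.val y.val),
    fun x y => by simp only [min_comm, max_comm]⟩

instance decAdj {n k : ℕ} (c : Sym2 (Fin n) → Fin k) (i : Fin k) :
    DecidableRel (colorClass c i).Adj :=
  fun u v => inferInstanceAs (Decidable (u ≠ v ∧ c s(u, v) = i))

lemma reach_closed {V : Type*} {G : SimpleGraph V} {P : V → Prop}
    (h : ∀ x y, G.Adj x y → P x → P y) {u v : V} (r : G.Reachable u v) :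
    P u → P v := by
  obtain ⟨w⟩ := r
  induction w with
  | nil => exact id
  | cons a _ ih => exact fun hp => ih (h _ _ a hp)

/-- Any graph on 5 vertices has at most 2 components containing an edge. -/
lemma numEdgeComps_le_two (G : SimpleGraph (Fin 5)) : numEdgeComps G ≤ 2 := by
  have hex : ∀ C : {C : G.ConnectedComponent //
      ∃ u v : Fin 5, G.Adj u v ∧ G.connectedComponentMk u = C},
      ∃ p : Fin 5 × Fin 5, p.1 ≠ p.2 ∧
      G.connectedComponentMk p.1 = (C : G.ConnectedComponent) ∧
      G.connectedComponentMk p.2 = (C : G.ConnectedComponent) := by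
    rintro ⟨C, u, v, hadj, hu⟩
    exact ⟨(u, v), hadj.ne, hu,
      (SimpleGraph.ConnectedComponent.eq.2 hadj.symm.reachable).trans hu⟩
  choose p hne h1 h2 using hex
  have hinj : Function.Injective (fun x : {C : G.ConnectedComponent //
      ∃ u v : Fin 5, G.Adj u v ∧ G.connectedComponentMk u = C} × Bool =>
      if x.2 then (p x.1).1 else (p x.1).2) := by
    rintro ⟨C, b⟩ ⟨D, b'⟩ heq
    simp only at heq
    have hCD : C = D := by
      rcases b <;> rcases b' <;> simp only [if_true, if_false, Bool.false_eq_true] at heq <;>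
        apply Subtype.ext
      · rw [← h2 C, heq, h2 D]
      · rw [← h2 C, heq, h1 D]
      · rw [← h1 C, heq, h2 D]
      · rw [← h1 C, heq, h1 D]
    subst hCD
    rcases b <;> rcases b' <;>
      simp only [if_true, if_false, Bool.false_eq_true] at heq ⊢
    · exact absurd heq.symm (hne C)
    · exact absurd heq (hne C)
  have hcard : Nat.card ({C : G.ConnectedComponent //
      ∃ u v : Fin 5, G.Adj u v ∧ G.connectedComponentMk u = C} × Bool) ≤
      Nat.card (Fin 5) :=
    Nat.card_le_card_of_injective _ hinj
  rw [Nat.card_prod, Nat.card_eq_fintype_card (α := Bool),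
    Nat.card_eq_fintype_card (α := Fin 5)] at hcard
  simp only [Fintype.card_bool, Fintype.card_fin] at hcard
  unfold numEdgeComps
  omega

lemma two_le_numEdgeComps {G : SimpleGraph (Fin 5)} {u1 v1 u2 v2 : Fin 5}
    (h1 : G.Adj u1 v1) (h2 : G.Adj u2 v2) (hnr : ¬ G.Reachable u1 u2) :
    2 ≤ numEdgeComps G := by
  have hne : (⟨G.connectedComponentMk u1, u1, v1, h1, rfl⟩ :
      {C : G.ConnectedComponent //
        ∃ u v : Fin 5, G.Adj u v ∧ G.connectedComponentMk u = C}) ≠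
      ⟨G.connectedComponentMk u2, u2, v2, h2, rfl⟩ := by
    intro h
    exact hnr ((SimpleGraph.ConnectedComponent.eq).1 (congrArg Subtype.val h))
  have : Nontrivial {C : G.ConnectedComponent //
      ∃ u v : Fin 5, G.Adj u v ∧ G.connectedComponentMk u = C} := ⟨_, _, hne⟩
  have := Finite.one_lt_card_iff_nontrivial.2 this
  unfold numEdgeComps
  omega

lemma not_reach_of_closed {G : SimpleGraph (Fin 5)} {P : Fin 5 → Prop}
    (h : ∀ x y, G.Adj x y → P x → P y) {u v : Fin 5} (hu : P u) (hv : ¬ P v) :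
    ¬ G.Reachable u v :=
  fun r => hv (reach_closed h r hu)

/-- `f_3(K_5) = 2`. -/
theorem f_three_K5 : fGraph 5 3 = 2 := by
  have hub : ∀ c : Sym2 (Fin 5) → Fin 3, minComps c ≤ 2 := by
    intro c
    have hmem : numEdgeComps (colorClass c (c s(0, 1))) ∈
        ((fun i => numEdgeComps (colorClass c i)) '' {i | usedColor c i}) :=
      ⟨c s(0, 1), ⟨0, 1, by decide, rfl⟩, rfl⟩
    exact le_trans (csInf_le (OrderBot.bddBelow _) hmem)
      (numEdgeComps_le_two _)
  have hlb : 2 ≤ minComps c0 := by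
    apply le_csInf
    · exact ⟨numEdgeComps (colorClass c0 0), ⟨0, ⟨0, 1, by decide⟩, rfl⟩⟩
    rintro b ⟨i, -, rfl⟩
    fin_cases i
    · exact two_le_numEdgeComps (u1 := 0) (v1 := 1) (u2 := 2) (v2 := 3)
        (by decide) (by decide)
        (not_reach_of_closed (P := fun x => x = 0 ∨ x = 1) (by decide)
          (by decide) (by decide))
    · exact two_le_numEdgeComps (u1 := 0) (v1 := 2) (u2 := 1) (v2 := 4)
        (by decide) (by decide)
        (not_reach_of_closed (P := fun x => x = 0 ∨ x = 2 ∨ x = 3) (by decide)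
          (by decide) (by decide))
    · exact two_le_numEdgeComps (u1 := 0) (v1 := 4) (u2 := 1) (v2 := 2)
        (by decide) (by decide)
        (not_reach_of_closed (P := fun x => x = 0 ∨ x = 4) (by decide)
          (by decide) (by decide))
  have hbA : BddAbove (Set.range fun c : Sym2 (Fin 5) → Fin 3 => minComps c) :=
    ⟨2, by rintro x ⟨c, rfl⟩; exact hub c⟩
  apply le_antisymm
  · exact csSup_le ⟨minComps c0, ⟨c0, rfl⟩⟩ (by rintro x ⟨c, rfl⟩; exact hub c)
  · exact le_trans hlb (le_csSup hbA ⟨c0, rfl⟩)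
end

section
/- For every n ≥ 6, f_3(K_n) = ⌊n/6⌋ + 1; i.e., there is a 3-edge-coloring of K_n in which every color class has at least ⌊n/6⌋+1 components, and in every 3-edge-coloring of K_n some color class has at most ⌊n/6⌋+1 components. -/
section Upper

variable {n : ℕ} (c : Sym2 (Fin n) → Fin 3)

def CRel (i : Fin 3) (u v : Fin n) : Prop :=
  (colorClass c i).connectedComponentMk u = (colorClass c i).connectedComponentMk v

variable {c}

lemma CRel.rfl {i : Fin 3} {u : Fin n} : CRel c i u u := Eq.refl _

lemma CRel.symm {i : Fin 3} {u v : Fin n} (h : CRel c i u v) : CRel c i v u := Eq.symm h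

lemma CRel.trans {i : Fin 3} {u v w : Fin n} (h : CRel c i u v) (h' : CRel c i v w) :
    CRel c i u w := Eq.trans h h'

lemma rel_of_edge {u v : Fin n} (huv : u ≠ v) : CRel c (c s(u, v)) u v :=
  SimpleGraph.ConnectedComponent.connectedComponentMk_eq_of_adj ⟨huv, rfl⟩

lemma used_of_rel {i : Fin 3} {u v : Fin n} (h : CRel c i u v) (huv : u ≠ v) :
    usedColor c i := by
  have hr : (colorClass c i).Reachable u v := SimpleGraph.ConnectedComponent.exact h
  obtain ⟨p⟩ := hr
  cases p with
  | nil => exact absurd rfl huv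
  | cons ha _ => exact ⟨_, _, ha.1, ha.2⟩

lemma fin3_cases {i1 i2 i3 : Fin 3} (h12 : i1 ≠ i2) (h13 : i1 ≠ i3) (h23 : i2 ≠ i3)
    (j : Fin 3) : j = i1 ∨ j = i2 ∨ j = i3 := by
  have a1 := i1.isLt; have a2 := i2.isLt; have a3 := i3.isLt; have a4 := j.isLt
  simp only [Ne, Fin.ext_iff] at *
  omega

lemma cover3 {i1 i2 i3 : Fin 3} (h12 : i1 ≠ i2) (h13 : i1 ≠ i3) (h23 : i2 ≠ i3)
    {u v : Fin n} (huv : u ≠ v) :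
    CRel c i1 u v ∨ CRel c i2 u v ∨ CRel c i3 u v := by
  rcases fin3_cases h12 h13 h23 (c s(u, v)) with h | h | h
  · exact Or.inl (h ▸ rel_of_edge huv)
  · exact Or.inr (Or.inl (h ▸ rel_of_edge huv))
  · exact Or.inr (Or.inr (h ▸ rel_of_edge huv))

lemma comps_le_one {i : Fin 3} (s : Fin n) (h : ∀ v, CRel c i v s) :
    numEdgeComps (colorClass c i) ≤ 1 := by
  have hinj : Function.Injective
      (fun _ : {C : (colorClass c i).ConnectedComponent //
        ∃ u v : Fin n, (colorClass c i).Adj u v ∧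
          (colorClass c i).connectedComponentMk u = C} => (0 : Fin 1)) := by
    intro a b _
    obtain ⟨u, v, _, hu⟩ := a.2
    obtain ⟨u', v', _, hu'⟩ := b.2
    apply Subtype.ext
    rw [← hu, ← hu', h u, h u']
  have := Nat.card_le_card_of_injective _ hinj
  simpa [numEdgeComps, Nat.card_eq_fintype_card] using this

lemma comps_le_two {i : Fin 3} (s₁ s₂ : Fin n) (h : ∀ v, CRel c i v s₁ ∨ CRel c i v s₂) :
    numEdgeComps (colorClass c i) ≤ 2 := by
  classical
  set G := colorClass c i with hG
  have hinj : Function.Injective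
      (fun C : {C : G.ConnectedComponent //
        ∃ u v : Fin n, G.Adj u v ∧ G.connectedComponentMk u = C} =>
        (if C.1 = G.connectedComponentMk s₁ then (0 : Fin 2) else 1)) := by
    intro a b hab
    apply Subtype.ext
    by_cases ha : a.1 = G.connectedComponentMk s₁
    · by_cases hb : b.1 = G.connectedComponentMk s₁
      · rw [ha, hb]
      · simp [ha, hb] at hab
    · by_cases hb : b.1 = G.connectedComponentMk s₁
      · simp [ha, hb] at hab
      · obtain ⟨u, v, _, hu⟩ := a.2
        obtain ⟨u', v', _, hu'⟩ := b.2
        have h1 : a.1 = G.connectedComponentMk s₂ := by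
          rcases h u with hh | hh
          · exact absurd (hu ▸ hh) ha
          · exact hu ▸ hh
        have h2 : b.1 = G.connectedComponentMk s₂ := by
          rcases h u' with hh | hh
          · exact absurd (hu' ▸ hh) hb
          · exact hu' ▸ hh
        rw [h1, h2]
  have := Nat.card_le_card_of_injective _ hinj
  simpa [numEdgeComps, Nat.card_eq_fintype_card] using this

lemma many_vertices {i : Fin 3} (s : Fin n)
    (h : n / 6 + 2 ≤ numEdgeComps (colorClass c i)) :
    2 * (n / 6 + 1) ≤ Set.ncard {v : Fin n | ¬ CRel c i v s} := by
  classical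
  set G := colorClass c i with hG
  set T := {C : G.ConnectedComponent //
      ∃ u v : Fin n, G.Adj u v ∧ G.connectedComponentMk u = C} with hT
  set T' := {C : T // C.1 ≠ G.connectedComponentMk s} with hT'
  -- step 1 : n/6+1 ≤ Nat.card T'
  have hstep1 : n / 6 + 1 ≤ Nat.card T' := by
    have hinj : Function.Injective (fun C : T =>
        if hc : C.1 = G.connectedComponentMk s then (none : Option T') else some ⟨C, hc⟩) := by
      intro a b hab
      by_cases ha : a.1 = G.connectedComponentMk s
      · by_cases hb : b.1 = G.connectedComponentMk s
        · exact Subtype.ext (ha.trans hb.symm)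
        · simp [ha, hb] at hab
      · by_cases hb : b.1 = G.connectedComponentMk s
        · simp [ha, hb] at hab
        · simp only [ha, hb, dif_neg, not_false_iff, Option.some_inj] at hab
          exact congrArg Subtype.val hab
    have hle := Nat.card_le_card_of_injective _ hinj
    have hcard : Nat.card (Option T') = Nat.card T' + 1 := by
      letI := Fintype.ofFinite T'
      simp [Nat.card_eq_fintype_card]
    have hT0 : n / 6 + 2 ≤ Nat.card T := h
    omega
  -- step 2 : Nat.card T' * 2 ≤ ncard
  have e : ∀ x : T', ∃ u v : Fin n, G.Adj u v ∧ G.connectedComponentMk u = x.1.1 :=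
    fun x => x.1.2
  choose eu ev hadj hmk using e
  have hmkv : ∀ x : T', G.connectedComponentMk (ev x) = x.1.1 := by
    intro x
    rw [← SimpleGraph.ConnectedComponent.connectedComponentMk_eq_of_adj (hadj x)]
    exact hmk x
  have hmem : ∀ (x : T') (b : Bool),
      (if b then eu x else ev x) ∈ {v : Fin n | ¬ CRel c i v s} := by
    intro x b
    simp only [Set.mem_setOf_eq]
    intro hrel
    apply x.2
    cases b with
    | false => rw [← hmkv x]; exact hrel
    | true => rw [← hmk x]; exact hrel
  have hinj2 : Function.Injective (fun p : T' × Bool =>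
      (⟨if p.2 then eu p.1 else ev p.1, hmem p.1 p.2⟩ :
        {v : Fin n // v ∈ {v : Fin n | ¬ CRel c i v s}})) := by
    intro ⟨x, b⟩ ⟨y, b'⟩ hxy
    simp only [Subtype.mk.injEq] at hxy
    have hcomp : x.1.1 = y.1.1 := by
      have h1 : G.connectedComponentMk (if b then eu x else ev x) = x.1.1 := by
        cases b with
        | false => simpa using hmkv x
        | true => simpa using hmk x
      have h2 : G.connectedComponentMk (if b' then eu y else ev y) = y.1.1 := by
        cases b' with
        | false => simpa using hmkv y
        | true => simpa using hmk y
      rw [← h1, ← h2, hxy]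
    have hx : x = y := Subtype.ext (Subtype.ext hcomp)
    subst hx
    have : b = b' := by
      cases b <;> cases b' <;> simp_all
      · exact absurd hxy.symm (hadj x).ne
      · exact absurd hxy (hadj x).ne
    rw [this]
  have hle2 := Nat.card_le_card_of_injective _ hinj2
  rw [Nat.card_prod] at hle2
  have hbool : Nat.card Bool = 2 := by simp [Nat.card_eq_fintype_card]
  rw [hbool] at hle2
  rw [Nat.card_coe_set_eq] at hle2
  omega

lemma total_false (hn : 6 ≤ n)
    (H : ∀ i, usedColor c i → n / 6 + 2 ≤ numEdgeComps (colorClass c i))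
    (i : Fin 3) (h : ∀ u v : Fin n, CRel c i u v) : False := by
  have h01 : (⟨0, by omega⟩ : Fin n) ≠ ⟨1, by omega⟩ := by
    simp [Fin.ext_iff]
  have hused := used_of_rel (h ⟨0, by omega⟩ ⟨1, by omega⟩) h01
  have h1 := comps_le_one (⟨0, by omega⟩ : Fin n) (fun v => h v _)
  have h2 := H i hused
  omega

lemma star_false (hn : 6 ≤ n)
    (H : ∀ i, usedColor c i → n / 6 + 2 ≤ numEdgeComps (colorClass c i))
    {i1 i2 i3 : Fin 3} (h12 : i1 ≠ i2) (h13 : i1 ≠ i3) (h23 : i2 ≠ i3)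
    {s t : Fin n} (hst1 : CRel c i1 s t) (hst2 : ¬ CRel c i2 s t) (hst3 : ¬ CRel c i3 s t)
    (hall : ∀ u, ¬ CRel c i1 u s → (CRel c i2 u t ∧ CRel c i3 u s)) : False := by
  have hst : s ≠ t := fun h => hst2 (h ▸ CRel.rfl)
  by_cases hw : ∀ u, CRel c i1 u s
  · have h1 := comps_le_one s hw
    have h2 := H i1 (used_of_rel hst1 hst)
    omega
  push_neg at hw
  obtain ⟨w, hw⟩ := hw
  have hw2 : CRel c i2 w t := (hall w hw).1
  have hw3 : CRel c i3 w s := (hall w hw).2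
  have hwt : w ≠ t := by
    rintro rfl
    exact hst3 hw3.symm
  have hws : w ≠ s := by
    rintro rfl
    exact hw CRel.rfl
  have hc1 := many_vertices s (H i1 (used_of_rel hst1 hst))
  have hc2 := many_vertices t (H i2 (used_of_rel hw2 hwt))
  have hc3 := many_vertices s (H i3 (used_of_rel hw3 hws))
  set S1 := {v : Fin n | ¬ CRel c i1 v s} with hS1
  set S2 := {v : Fin n | ¬ CRel c i2 v t} with hS2
  set S3 := {v : Fin n | ¬ CRel c i3 v s} with hS3
  have d12 : Disjoint S1 S2 := by
    rw [Set.disjoint_left]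
    intro v h1 h2
    exact h2 (hall v h1).1
  have d13 : Disjoint S1 S3 := by
    rw [Set.disjoint_left]
    intro v h1 h3
    exact h3 (hall v h1).2
  have d23 : Disjoint S2 S3 := by
    rw [Set.disjoint_left]
    intro v h2 h3
    have hv1 : CRel c i1 v s := by
      by_contra hv
      exact h2 (hall v hv).1
    have hvw : v ≠ w := by
      rintro rfl
      exact hw hv1
    rcases cover3 h12 h13 h23 hvw with hh | hh | hh
    · exact hw (hh.symm.trans hv1)
    · exact h2 (hh.trans hw2)
    · exact h3 (hh.trans hw3)
  have hsum : S1.ncard + S2.ncard + S3.ncard ≤ n := by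
    have h12' : (S1 ∪ S2).ncard = S1.ncard + S2.ncard := Set.ncard_union_eq d12
    have hd : Disjoint (S1 ∪ S2) S3 := by
      rw [Set.disjoint_union_left]
      exact ⟨d13, d23⟩
    have h123 : (S1 ∪ S2 ∪ S3).ncard = S1.ncard + S2.ncard + S3.ncard := by
      rw [Set.ncard_union_eq hd, h12']
    have hle : (S1 ∪ S2 ∪ S3).ncard ≤ (Set.univ : Set (Fin n)).ncard :=
      Set.ncard_le_ncard (Set.subset_univ _) Set.finite_univ
    rw [h123] at hle
    simpa [Set.ncard_univ, Nat.card_eq_fintype_card] using hle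
  omega

lemma exone_false (hn : 6 ≤ n)
    (H : ∀ i, usedColor c i → n / 6 + 2 ≤ numEdgeComps (colorClass c i))
    {i1 i2 i3 : Fin 3} (h12 : i1 ≠ i2) (h13 : i1 ≠ i3) (h23 : i2 ≠ i3)
    {s t : Fin n} (h1 : CRel c i1 s t) (h2 : ¬ CRel c i2 s t) (h3 : ¬ CRel c i3 s t) :
    False := by
  have hst : s ≠ t := fun h => h2 (h ▸ CRel.rfl)
  have hsplit : ∀ u, ¬ CRel c i1 u s →
      (CRel c i2 u s ∧ CRel c i3 u t) ∨ (CRel c i2 u t ∧ CRel c i3 u s) := by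
    intro u hu
    have hus : u ≠ s := by
      rintro rfl
      exact hu CRel.rfl
    have hut1 : ¬ CRel c i1 u t := fun h => hu (h.trans h1.symm)
    rcases cover3 h12 h13 h23 hus with hh | hh | hh
    · exact absurd hh hu
    · left
      refine ⟨hh, ?_⟩
      have hut : u ≠ t := by
        rintro rfl
        exact h2 hh.symm
      rcases cover3 h12 h13 h23 hut with hg | hg | hg
      · exact absurd hg hut1
      · exact absurd (hh.symm.trans hg) h2
      · exact hg
    · right
      have hut : u ≠ t := by
        rintro rfl
        exact h3 hh.symm
      refine ⟨?_, hh⟩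
      rcases cover3 h12 h13 h23 hut with hg | hg | hg
      · exact absurd hg hut1
      · exact hg
      · exact absurd (hh.symm.trans hg) h3
  by_cases hT1 : ∃ u, ¬ CRel c i1 u s ∧ CRel c i2 u s ∧ CRel c i3 u t
  · by_cases hT2 : ∃ v, ¬ CRel c i1 v s ∧ CRel c i2 v t ∧ CRel c i3 v s
    · obtain ⟨u0, hu0, hu02, hu03⟩ := hT1
      obtain ⟨v0, hv0, hv02, hv03⟩ := hT2
      have huv0 : u0 ≠ v0 := by
        rintro rfl
        exact h2 (hu02.symm.trans hv02)
      have h10 : CRel c i1 u0 v0 := by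
        rcases cover3 h12 h13 h23 huv0 with hh | hh | hh
        · exact hh
        · exact absurd (hu02.symm.trans (hh.trans hv02)) h2
        · exact absurd (hu03.symm.trans (hh.trans hv03)).symm h3
      have key : ∀ z, CRel c i1 z s ∨ CRel c i1 z u0 := by
        intro z
        by_cases hz : CRel c i1 z s
        · exact Or.inl hz
        right
        rcases hsplit z hz with ⟨hz2, hz3⟩ | ⟨hz2, hz3⟩
        · have hzv0 : z ≠ v0 := by
            rintro rfl
            exact h2 (hz2.symm.trans hv02)
          have : CRel c i1 z v0 := by
            rcases cover3 h12 h13 h23 hzv0 with hh | hh | hh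
            · exact hh
            · exact absurd (hz2.symm.trans (hh.trans hv02)) h2
            · exact absurd (hz3.symm.trans (hh.trans hv03)).symm h3
          exact this.trans h10.symm
        · have hzu0 : z ≠ u0 := by
            rintro rfl
            exact h2 (hu02.symm.trans hz2)
          rcases cover3 h12 h13 h23 hzu0 with hh | hh | hh
          · exact hh
          · exact absurd (hu02.symm.trans (hh.symm.trans hz2)) h2
          · exact absurd (hz3.symm.trans (hh.trans hu03)) h3
      have hle := comps_le_two s u0 key
      have hge := H i1 (used_of_rel h1 hst)
      omega
    · push_neg at hT2
      have hall' : ∀ u, ¬ CRel c i1 u s → CRel c i2 u s ∧ CRel c i3 u t := by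
        intro u hu
        rcases hsplit u hu with h | h
        · exact h
        · exact absurd h.2 (hT2 u hu h.1)
      exact star_false hn H h13 h12 h23.symm h1 h3 h2
        (fun u hu => ⟨(hall' u hu).2, (hall' u hu).1⟩)
  · push_neg at hT1
    have hall : ∀ u, ¬ CRel c i1 u s → CRel c i2 u t ∧ CRel c i3 u s := by
      intro u hu
      rcases hsplit u hu with h | h
      · exact absurd h.2 (hT1 u hu h.1)
      · exact h
    exact star_false hn H h12 h13 h23 h1 h2 h3 hall

theorem upper_bound (hn : 6 ≤ n) :
    ∃ i, usedColor c i ∧ numEdgeComps (colorClass c i) ≤ n / 6 + 1 := by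
  by_contra hcon
  push_neg at hcon
  have H : ∀ i, usedColor c i → n / 6 + 2 ≤ numEdgeComps (colorClass c i) := by
    intro i hi
    have := hcon i hi
    omega
  by_cases hEX : ∃ (i1 i2 i3 : Fin 3) (s t : Fin n), i1 ≠ i2 ∧ i1 ≠ i3 ∧ i2 ≠ i3 ∧
      CRel c i1 s t ∧ ¬ CRel c i2 s t ∧ ¬ CRel c i3 s t
  · obtain ⟨i1, i2, i3, s, t, a, b, d, e, f, g⟩ := hEX
    exact exone_false hn H a b d e f g
  · push_neg at hEX
    by_cases hALL : ∀ (i : Fin 3) (u v : Fin n), CRel c i u v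
    · exact total_false hn H 0 (hALL 0)
    · push_neg at hALL
      obtain ⟨i, s, t, hist⟩ := hALL
      have hst : s ≠ t := by
        rintro rfl
        exact hist CRel.rfl
      set j := c s(s, t) with hj
      have hjst : CRel c j s t := rel_of_edge hst
      have hji : j ≠ i := by
        rintro rfl
        exact hist hjst
      obtain ⟨l, hli, hlj⟩ : ∃ l : Fin 3, l ≠ i ∧ l ≠ j := by
        refine ⟨⟨3 - i.val - j.val, ?_⟩, ?_, ?_⟩ <;>
          · have := i.isLt
            have := j.isLt
            have hij := hji
            simp only [Ne, Fin.ext_iff] at *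
            omega
      have key : ∀ u, CRel c j u s := by
        intro u
        by_contra hu
        have hus : u ≠ s := by
          rintro rfl
          exact hu CRel.rfl
        have hboth : CRel c i u s ∧ CRel c l u s := by
          rcases cover3 hji hlj.symm hli.symm hus with hh | hh | hh
          · exact absurd hh hu
          · exact ⟨hh, hEX i j l u s hji.symm hli.symm hlj.symm hh hu⟩
          · exact ⟨hEX l j i u s hlj hli hji hh hu, hh⟩
        obtain ⟨hius, hlus⟩ := hboth
        have hut : u ≠ t := by
          rintro rfl
          exact hist hius.symm
        have hiut : ¬ CRel c i u t := fun h => hist (hius.symm.trans h)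
        have hjut : ¬ CRel c j u t := fun h => hu (h.trans hjst.symm)
        rcases cover3 hji.symm hli.symm hlj.symm hut with hh | hh | hh
        · exact hiut hh
        · exact hjut hh
        · exact hjut (hEX l i j u t hli hlj hji.symm hh hiut)
      exact total_false hn H j (fun u v => (key u).trans (key v).symm)

end Upper

def blk (m v : ℕ) : ℕ :=
  if v < 2 * m then 1 else if v < 4 * m then 2 else if v < 6 * m then 3 else 0

lemma blk_le (m v : ℕ) : blk m v ≤ 3 := by
  unfold blk
  split_ifs <;> omega

def colNat (m u v : ℕ) : ℕ :=
  if blk m u = blk m v then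
    (if blk m u ≠ 0 ∧ u / 2 = v / 2 then blk m u else blk m u % 3 + 1)
  else if blk m u = 0 then blk m v % 3 + 1
  else if blk m v = 0 then blk m u % 3 + 1
  else 6 - blk m u - blk m v

lemma colNat_symm (m u v : ℕ) : colNat m u v = colNat m v u := by
  unfold colNat
  by_cases h : blk m u = blk m v
  · rw [if_pos h, if_pos h.symm, h]
    by_cases h2 : u / 2 = v / 2
    · simp [h2]
    · simp [h2, Ne.symm h2]
  · rw [if_neg h, if_neg (Ne.symm h)]
    by_cases hu0 : blk m u = 0
    · have hv0 : blk m v ≠ 0 := fun hh => h (by omega)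
      rw [if_pos hu0, if_neg hv0, if_pos hu0]
    · by_cases hv0 : blk m v = 0
      · rw [if_neg hu0, if_pos hv0, if_pos hv0]
      · rw [if_neg hu0, if_neg hv0, if_neg hv0, if_neg hu0]
        omega

lemma colNat_range (m u v : ℕ) : 1 ≤ colNat m u v ∧ colNat m u v ≤ 3 := by
  have hu := blk_le m u
  have hv := blk_le m v
  unfold colNat
  split_ifs <;> omega

def gN (n k m v : ℕ) : ℕ := if blk m v = k then v / 2 else n

lemma colNat_g {m u v k : ℕ} (n : ℕ) (h : colNat m u v = k) :
    gN n k m u = gN n k m v := by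
  have hu := blk_le m u
  have hv := blk_le m v
  unfold colNat at h
  unfold gN
  split_ifs at h ⊢ <;> omega

def cstar (n : ℕ) : Sym2 (Fin n) → Fin 3 :=
  Sym2.lift ⟨fun u v => ⟨(colNat (n / 6) u.val v.val - 1) % 3, Nat.mod_lt _ (by norm_num)⟩,
    fun u v => by simp only [Fin.mk.injEq]; rw [colNat_symm]⟩

lemma cstar_adj {n : ℕ} {i : Fin 3} {u v : Fin n} (h : (colorClass (cstar n) i).Adj u v) :
    colNat (n / 6) u.val v.val = i.val + 1 := by
  obtain ⟨hne, hc⟩ := h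
  have hrange := colNat_range (n / 6) u.val v.val
  have hv : ((cstar n) s(u, v)).val = (colNat (n / 6) u.val v.val - 1) % 3 := by
    simp [cstar]
  rw [hc] at hv
  have := i.isLt
  omega

lemma cstar_adj_of {n : ℕ} {i : Fin 3} {u v : Fin n} (hne : u ≠ v)
    (h : colNat (n / 6) u.val v.val = i.val + 1) : (colorClass (cstar n) i).Adj u v := by
  refine ⟨hne, Fin.ext ?_⟩
  have hval : ((cstar n) s(u, v)).val = (colNat (n / 6) u.val v.val - 1) % 3 := by
    simp [cstar]
  rw [hval, h]
  have := i.isLt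
  omega

lemma cstar_walk_g {n : ℕ} {i : Fin 3} {u v : Fin n}
    (p : (colorClass (cstar n) i).Walk u v) :
    gN n (i.val + 1) (n / 6) u.val = gN n (i.val + 1) (n / 6) v.val := by
  induction p with
  | nil => rfl
  | cons ha _ ih => exact (colNat_g n (cstar_adj ha)).trans ih

lemma card_lb_gen {n : ℕ} (i : Fin 3) (K : ℕ) (hK : K = i.val + 1)
    (A B : ℕ → ℕ)
    (hlt : ∀ jv, jv ≤ n / 6 → A jv < n ∧ B jv < n)
    (hne : ∀ jv, jv ≤ n / 6 → A jv ≠ B jv)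
    (hcol : ∀ jv, jv ≤ n / 6 → colNat (n / 6) (A jv) (B jv) = K)
    (hginj : ∀ jv, jv ≤ n / 6 → ∀ jv', jv' ≤ n / 6 →
      gN n K (n / 6) (A jv) = gN n K (n / 6) (A jv') → jv = jv') :
    n / 6 + 1 ≤ numEdgeComps (colorClass (cstar n) i) := by
  set G := colorClass (cstar n) i with hG
  have hjle : ∀ j : Fin (n / 6 + 1), j.val ≤ n / 6 := fun j => by
    have := j.isLt; omega
  have hadj : ∀ j : Fin (n / 6 + 1),
      G.Adj ⟨A j.val, (hlt j.val (hjle j)).1⟩ ⟨B j.val, (hlt j.val (hjle j)).2⟩ := by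
    intro j
    apply cstar_adj_of
    · intro hh
      exact hne j.val (hjle j) (congrArg Fin.val hh)
    · rw [← hK]
      exact hcol j.val (hjle j)
  have hinj : Function.Injective (fun j : Fin (n / 6 + 1) =>
      (⟨G.connectedComponentMk ⟨A j.val, (hlt j.val (hjle j)).1⟩,
        ⟨_, _, hadj j, rfl⟩⟩ :
        {C : G.ConnectedComponent //
          ∃ u v : Fin n, G.Adj u v ∧ G.connectedComponentMk u = C})) := by
    intro j j' hjj
    simp only [Subtype.mk.injEq] at hjj
    have hg := cstar_walk_g ((SimpleGraph.ConnectedComponent.exact hjj).some)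
    rw [← hK] at hg
    exact Fin.ext (hginj j.val (hjle j) j'.val (hjle j') hg)
  have := Nat.card_le_card_of_injective _ hinj
  simpa [numEdgeComps, Nat.card_eq_fintype_card] using this


lemma blk_eval {m v r : ℕ}
    (h : (v < 2*m ∧ r = 1) ∨ (2*m ≤ v ∧ v < 4*m ∧ r = 2) ∨ (4*m ≤ v ∧ v < 6*m ∧ r = 3) ∨
      (6*m ≤ v ∧ r = 0)) : blk m v = r := by
  unfold blk
  split_ifs <;> omega

lemma colNat_eval {m u v a b r : ℕ} (hu : blk m u = a) (hv : blk m v = b)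
    (h : (a = b ∧ a ≠ 0 ∧ u / 2 = v / 2 ∧ r = a) ∨
         (a = b ∧ ¬ (a ≠ 0 ∧ u / 2 = v / 2) ∧ r = a % 3 + 1) ∨
         (a ≠ b ∧ a = 0 ∧ r = b % 3 + 1) ∨
         (a ≠ b ∧ a ≠ 0 ∧ b = 0 ∧ r = a % 3 + 1) ∨
         (a ≠ b ∧ a ≠ 0 ∧ b ≠ 0 ∧ r = 6 - a - b)) : colNat m u v = r := by
  unfold colNat
  rw [hu, hv]
  split_ifs <;> omega

lemma gN_eval {n m v k a r : ℕ} (hv : blk m v = a)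
    (h : (a = k ∧ r = v / 2) ∨ (a ≠ k ∧ r = n)) : gN n k m v = r := by
  unfold gN
  rw [hv]
  split_ifs <;> omega

lemma cstar_lb {n : ℕ} (hn : 6 ≤ n) (i : Fin 3) :
    n / 6 + 1 ≤ numEdgeComps (colorClass (cstar n) i) := by
  have h6 : 6 * (n / 6) ≤ n ∧ 1 ≤ n / 6 := by omega
  set m := n / 6 with hm
  fin_cases i
  · apply card_lb_gen _ 1 rfl
      (fun jv => if jv < m then 2 * jv else 2 * m)
      (fun jv => if jv < m then 2 * jv + 1 else 4 * m)
    · intro jv hjv; split_ifs <;> omega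
    · intro jv hjv; split_ifs <;> omega
    · intro jv hjv
      by_cases hj : jv < m
      · rw [if_pos hj, if_pos hj]
        exact colNat_eval (blk_eval (m := m) (r := 1) (by omega))
          (blk_eval (m := m) (r := 1) (by omega)) (by omega)
      · rw [if_neg hj, if_neg hj]
        exact colNat_eval (blk_eval (m := m) (r := 2) (by omega))
          (blk_eval (m := m) (r := 3) (by omega)) (by omega)
    · have hval : ∀ jv, jv ≤ m →
          gN n 1 m (if jv < m then 2 * jv else 2 * m) = (if jv < m then jv else n) := by
        intro jv hjv
        by_cases hj : jv < m
        · rw [if_pos hj, if_pos hj]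
          exact gN_eval (blk_eval (m := m) (r := 1) (by omega)) (by omega)
        · rw [if_neg hj, if_neg hj]
          exact gN_eval (blk_eval (m := m) (r := 2) (by omega)) (by omega)
      intro jv hjv jv' hjv' hg
      rw [hval jv hjv, hval jv' hjv'] at hg
      split_ifs at hg <;> omega
  · apply card_lb_gen _ 2 rfl
      (fun jv => if jv < m then 2 * m + 2 * jv else 0)
      (fun jv => if jv < m then 2 * m + 2 * jv + 1 else 4 * m)
    · intro jv hjv; split_ifs <;> omega
    · intro jv hjv; split_ifs <;> omega
    · intro jv hjv
      by_cases hj : jv < m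
      · rw [if_pos hj, if_pos hj]
        exact colNat_eval (blk_eval (m := m) (r := 2) (by omega))
          (blk_eval (m := m) (r := 2) (by omega)) (by omega)
      · rw [if_neg hj, if_neg hj]
        exact colNat_eval (blk_eval (m := m) (r := 1) (by omega))
          (blk_eval (m := m) (r := 3) (by omega)) (by omega)
    · have hval : ∀ jv, jv ≤ m →
          gN n 2 m (if jv < m then 2 * m + 2 * jv else 0) = (if jv < m then m + jv else n) := by
        intro jv hjv
        by_cases hj : jv < m
        · rw [if_pos hj, if_pos hj]
          exact gN_eval (blk_eval (m := m) (r := 2) (by omega)) (by omega)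
        · rw [if_neg hj, if_neg hj]
          exact gN_eval (blk_eval (m := m) (r := 1) (by omega)) (by omega)
      intro jv hjv jv' hjv' hg
      rw [hval jv hjv, hval jv' hjv'] at hg
      split_ifs at hg <;> omega
  · apply card_lb_gen _ 3 rfl
      (fun jv => if jv < m then 4 * m + 2 * jv else 0)
      (fun jv => if jv < m then 4 * m + 2 * jv + 1 else 2 * m)
    · intro jv hjv; split_ifs <;> omega
    · intro jv hjv; split_ifs <;> omega
    · intro jv hjv
      by_cases hj : jv < m
      · rw [if_pos hj, if_pos hj]
        exact colNat_eval (blk_eval (m := m) (r := 3) (by omega))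
          (blk_eval (m := m) (r := 3) (by omega)) (by omega)
      · rw [if_neg hj, if_neg hj]
        exact colNat_eval (blk_eval (m := m) (r := 1) (by omega))
          (blk_eval (m := m) (r := 2) (by omega)) (by omega)
    · have hval : ∀ jv, jv ≤ m →
          gN n 3 m (if jv < m then 4 * m + 2 * jv else 0) = (if jv < m then 2 * m + jv else n) := by
        intro jv hjv
        by_cases hj : jv < m
        · rw [if_pos hj, if_pos hj]
          exact gN_eval (blk_eval (m := m) (r := 3) (by omega)) (by omega)
        · rw [if_neg hj, if_neg hj]
          exact gN_eval (blk_eval (m := m) (r := 1) (by omega)) (by omega)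
      intro jv hjv jv' hjv' hg
      rw [hval jv hjv, hval jv' hjv'] at hg
      split_ifs at hg <;> omega

lemma cstar_used {n : ℕ} (hn : 6 ≤ n) (i : Fin 3) : usedColor (cstar n) i := by
  have h6 : 6 * (n / 6) ≤ n ∧ 1 ≤ n / 6 := by omega
  set m := n / 6 with hm
  fin_cases i
  · have hcol : colNat m 0 1 = 1 :=
      colNat_eval (blk_eval (m := m) (r := 1) (by omega))
        (blk_eval (m := m) (r := 1) (by omega)) (by omega)
    refine ⟨⟨0, by omega⟩, ⟨1, by omega⟩, by simp [Fin.ext_iff], ?_⟩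
    exact (cstar_adj_of (by simp [Fin.ext_iff]) hcol).2
  · have hcol : colNat m (2 * m) (2 * m + 1) = 2 :=
      colNat_eval (blk_eval (m := m) (r := 2) (by omega))
        (blk_eval (m := m) (r := 2) (by omega)) (by omega)
    refine ⟨⟨2 * m, by omega⟩, ⟨2 * m + 1, by omega⟩, by simp [Fin.ext_iff], ?_⟩
    exact (cstar_adj_of (by simp [Fin.ext_iff]) hcol).2
  · have hcol : colNat m (4 * m) (4 * m + 1) = 3 :=
      colNat_eval (blk_eval (m := m) (r := 3) (by omega))
        (blk_eval (m := m) (r := 3) (by omega)) (by omega)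
    refine ⟨⟨4 * m, by omega⟩, ⟨4 * m + 1, by omega⟩, by simp [Fin.ext_iff], ?_⟩
    exact (cstar_adj_of (by simp [Fin.ext_iff]) hcol).2

/-- For every `n ≥ 6`, `f_3(K_n) = ⌊n/6⌋ + 1`: there is a 3-edge-coloring of
`K_n` in which every used color class has at least `⌊n/6⌋ + 1` components, and
in every 3-edge-coloring some used color class has at most `⌊n/6⌋ + 1`
components. -/
theorem f_three_Kn (n : ℕ) (hn : 6 ≤ n) :
    fGraph n 3 = n / 6 + 1 ∧
    (∃ c : Sym2 (Fin n) → Fin 3, ∀ i : Fin 3,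
      usedColor c i → n / 6 + 1 ≤ numEdgeComps (colorClass c i)) ∧
    (∀ c : Sym2 (Fin n) → Fin 3, ∃ i : Fin 3,
      usedColor c i ∧ numEdgeComps (colorClass c i) ≤ n / 6 + 1) := by
  have hupper : ∀ c : Sym2 (Fin n) → Fin 3,
      ∃ i, usedColor c i ∧ numEdgeComps (colorClass c i) ≤ n / 6 + 1 :=
    fun c => upper_bound hn
  have hlower : ∀ i, n / 6 + 1 ≤ numEdgeComps (colorClass (cstar n) i) := cstar_lb hn
  refine ⟨?_, ⟨cstar n, fun i _ => hlower i⟩, hupper⟩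
  have hminle : ∀ c : Sym2 (Fin n) → Fin 3, minComps c ≤ n / 6 + 1 := by
    intro c
    obtain ⟨i, hi, hle⟩ := hupper c
    exact le_trans (Nat.sInf_le ⟨i, hi, rfl⟩) hle
  have hstar : minComps (cstar n) = n / 6 + 1 := by
    refine le_antisymm (hminle _) ?_
    have hne : ((fun i => numEdgeComps (colorClass (cstar n) i)) ''
        {i | usedColor (cstar n) i}).Nonempty := ⟨_, ⟨0, cstar_used hn 0, rfl⟩⟩
    obtain ⟨i, hi, heq⟩ := Nat.sInf_mem hne
    rw [minComps, ← heq]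
    exact hlower i
  unfold fGraph
  apply le_antisymm
  · exact csSup_le ⟨minComps (cstar n), ⟨cstar n, rfl⟩⟩ (by rintro b ⟨c, rfl⟩; exact hminle c)
  · exact le_csSup ⟨n / 6 + 1, by rintro b ⟨c, rfl⟩; exact hminle c⟩ ⟨cstar n, hstar⟩
end

section
/- In every 3-edge-coloring of K_n (n ≥ 6), some color class induces a subgraph with at most ⌊n/6⌋ + 1 connected components. -/
section RelLemmas

variable {α : Type*} {r₁ r₂ r₃ : α → α → Prop}

lemma merge_rel (e₁ : Equivalence r₁) (e₂ : Equivalence r₂) (e₃ : Equivalence r₃)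
    (cov : ∀ x y : α, x ≠ y → r₁ x y ∨ r₂ x y ∨ r₃ x y)
    {x y : α} (hd : ∀ w, r₁ x w → r₂ y w → False) :
    ∀ w, r₁ x w ∨ r₂ y w → r₃ x w := by
  have hne : x ≠ y := by rintro rfl; exact hd x (e₁.refl x) (e₂.refl x)
  have hxy3 : r₃ x y := by
    rcases cov x y hne with h | h | h
    · exact absurd (e₂.refl y) (hd y h)
    · exact absurd (e₂.symm h) (hd x (e₁.refl x))
    · exact h
  intro w hw
  rcases hw with hw | hw
  · -- r₁ x w ; show r₃ x w via r₃ w y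
    have hne2 : w ≠ y := by rintro rfl; exact hd w hw (e₂.refl w)
    have hwy : r₃ w y := by
      rcases cov w y hne2 with h | h | h
      · exact absurd (e₂.refl y) (hd y (e₁.trans hw h))
      · exact absurd (e₂.symm h) (hd w hw)
      · exact h
    exact e₃.trans hxy3 (e₃.symm hwy)
  · -- r₂ y w
    have hne2 : x ≠ w := by rintro rfl; exact hd x (e₁.refl x) hw
    rcases cov x w hne2 with h | h | h
    · exact absurd hw (hd w h)
    · exact absurd (e₂.trans hw (e₂.symm h)) (hd x (e₁.refl x))
    · exact h

lemma sink_rel (e₁ : Equivalence r₁) (e₂ : Equivalence r₂) (e₃ : Equivalence r₃)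
    (cov : ∀ x y : α, x ≠ y → r₁ x y ∨ r₂ x y ∨ r₃ x y)
    {x y x' y' : α} (hd : ∀ w, r₁ x w → r₂ y w → False)
    (hd' : ∀ w, r₁ x' w → r₂ y' w → False) : r₃ x x' := by
  by_cases h : ∃ w, r₁ x w ∧ r₂ y' w
  · obtain ⟨w, h1, h2⟩ := h
    exact e₃.trans (merge_rel e₁ e₂ e₃ cov hd w (Or.inl h1))
      (e₃.symm (merge_rel e₁ e₂ e₃ cov hd' w (Or.inr h2)))
  · push_neg at h
    exact e₃.trans (merge_rel e₁ e₂ e₃ cov (fun w hw1 hw2 => h w hw1 hw2) y'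
        (Or.inr (e₂.refl y')))
      (e₃.symm (merge_rel e₁ e₂ e₃ cov hd' y' (Or.inr (e₂.refl y'))))

lemma meets_rel (e₁ : Equivalence r₁) (e₂ : Equivalence r₂) (e₃ : Equivalence r₃)
    (cov : ∀ x y : α, x ≠ y → r₁ x y ∨ r₂ x y ∨ r₃ x y)
    {x y : α} (hd : ∀ w, r₁ x w → r₂ y w → False)
    {a : α} (ha : ¬ r₃ x a) (y' : α) : ∃ w, r₁ a w ∧ r₂ y' w := by
  by_contra h
  push_neg at h
  exact ha (sink_rel e₁ e₂ e₃ cov hd (fun w h1 h2 => h w h1 h2))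

lemma pick_rel {r : α → α → Prop} (e : Equivalence r) {x1 x2 x3 : α}
    (h12 : ¬ r x1 x2) (h13 : ¬ r x1 x3) (h23 : ¬ r x2 x3) (u v : α) :
    ∃ x, ¬ r u x ∧ ¬ r v x := by
  by_contra h
  push_neg at h
  have c1 : r u x1 ∨ r v x1 := or_iff_not_imp_left.2 (h x1)
  have c2 : r u x2 ∨ r v x2 := or_iff_not_imp_left.2 (h x2)
  have c3 : r u x3 ∨ r v x3 := or_iff_not_imp_left.2 (h x3)
  rcases c1 with h1 | h1 <;> rcases c2 with h2 | h2 <;> rcases c3 with h3 | h3 <;>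
    first
      | exact h12 (e.trans (e.symm h1) h2)
      | exact h13 (e.trans (e.symm h1) h3)
      | exact h23 (e.trans (e.symm h2) h3)

lemma grid_rel (e₁ : Equivalence r₁) (e₂ : Equivalence r₂) (e₃ : Equivalence r₃)
    (cov : ∀ x y : α, x ≠ y → r₁ x y ∨ r₂ x y ∨ r₃ x y)
    (hmeet : ∀ x y, ∃ w, r₁ x w ∧ r₂ y w)
    {x1 x2 x3 y1 y2 y3 : α}
    (hx12 : ¬ r₁ x1 x2) (hx13 : ¬ r₁ x1 x3) (hx23 : ¬ r₁ x2 x3)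
    (hy12 : ¬ r₂ y1 y2) (hy13 : ¬ r₂ y1 y3) (hy23 : ¬ r₂ y2 y3) :
    ∀ u v, r₃ u v := by
  have key : ∀ u, ∀ x y : α, ¬ r₁ u x → ¬ r₂ u y → ∀ w, r₁ x w → r₂ y w → r₃ u w := by
    intro u x y hux huy w hw1 hw2
    have hne : u ≠ w := by rintro rfl; exact hux (e₁.symm hw1)
    rcases cov u w hne with h | h | h
    · exact absurd (e₁.trans h (e₁.symm hw1)) hux
    · exact absurd (e₂.trans h (e₂.symm hw2)) huy
    · exact h
  intro u v
  obtain ⟨x, hux, hvx⟩ := pick_rel e₁ hx12 hx13 hx23 u v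
  obtain ⟨y, huy, hvy⟩ := pick_rel e₂ hy12 hy13 hy23 u v
  obtain ⟨w, hw1, hw2⟩ := hmeet x y
  exact e₃.trans (key u x y hux huy w hw1 hw2) (e₃.symm (key v x y hvx hvy w hw1 hw2))

lemma twoPart_rel (e₁ : Equivalence r₁) (e₂ : Equivalence r₂)
    (cov2 : ∀ x y : α, x ≠ y → r₁ x y ∨ r₂ x y) (v₀ : α) :
    (∀ u w, r₁ u w) ∨ (∀ u w, r₂ u w) := by
  by_cases hA : ∀ u, r₁ v₀ u
  · exact Or.inl fun u w => e₁.trans (e₁.symm (hA u)) (hA w)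
  · push_neg at hA
    obtain ⟨u₁, hu₁⟩ := hA
    have key : ∀ a w, r₁ v₀ a → ¬ r₁ v₀ w → r₂ a w := by
      intro a w ha hw
      have hne : a ≠ w := by rintro rfl; exact hw ha
      rcases cov2 a w hne with h | h
      · exact absurd (e₁.trans ha h) hw
      · exact h
    refine Or.inr fun u w => ?_
    by_cases hu : r₁ v₀ u <;> by_cases hw : r₁ v₀ w
    · exact e₂.trans (key u u₁ hu hu₁) (e₂.symm (key w u₁ hw hu₁))
    · exact key u w hu hw
    · exact e₂.symm (key w u hw hu)
    · exact e₂.trans (e₂.symm (key v₀ u (e₁.refl v₀) hu)) (key v₀ w (e₁.refl v₀) hw)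

end RelLemmas

section GraphLemmas
open SimpleGraph

variable {n : ℕ}

lemma reach_adj {V : Type*} {G : SimpleGraph V} {u v : V}
    (h : G.Reachable u v) (hne : u ≠ v) : ∃ a b, G.Adj a b := by
  obtain ⟨w⟩ := h
  cases w with
  | nil => exact absurd rfl hne
  | cons h p => exact ⟨_, _, h⟩

lemma numEdgeComps_le_one {G : SimpleGraph (Fin n)}
    (h : ∀ u v, G.Reachable u v) : numEdgeComps G ≤ 1 := by
  have hs : Subsingleton {C : G.ConnectedComponent //
      ∃ u v : Fin n, G.Adj u v ∧ G.connectedComponentMk u = C} := by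
    constructor
    rintro ⟨C, u, v, -, hu⟩ ⟨C', u', v', -, hu'⟩
    have heq : G.connectedComponentMk u = G.connectedComponentMk u' :=
      (ConnectedComponent.eq).2 (h u u')
    exact Subtype.ext (hu ▸ hu' ▸ heq)
  exact Finite.card_le_one_iff_subsingleton.2 hs

lemma two_mul_numEdgeComps_le (G : SimpleGraph (Fin n)) (x₀ : Fin n) :
    2 * numEdgeComps G ≤ Nat.card {u : Fin n // ¬ G.Reachable x₀ u} + 2 := by
  classical
  set S := {C : G.ConnectedComponent //
      ∃ u v : Fin n, G.Adj u v ∧ G.connectedComponentMk u = C} with hS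
  set S' := {C : G.ConnectedComponent //
      (∃ u v : Fin n, G.Adj u v ∧ G.connectedComponentMk u = C) ∧
        C ≠ G.connectedComponentMk x₀} with hS'
  have h1 : Nat.card S ≤ Nat.card S' + 1 := by
    have : Nat.card S ≤ Nat.card (S' ⊕ PUnit.{1}) := by
      refine Nat.card_le_card_of_injective
        (fun C => if h : C.1 = G.connectedComponentMk x₀ then Sum.inr PUnit.unit
          else Sum.inl ⟨C.1, C.2, h⟩) ?_
      intro C D hCD
      by_cases hC : C.1 = G.connectedComponentMk x₀ <;>
        by_cases hD : D.1 = G.connectedComponentMk x₀ <;>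
        simp [hC, hD] at hCD
      · exact Subtype.ext (hC.trans hD.symm)
      · exact Subtype.ext (Subtype.mk_eq_mk.1 hCD)
    simpa [Nat.card_sum] using this
  have h2 : 2 * Nat.card S' ≤ Nat.card {u : Fin n // ¬ G.Reachable x₀ u} := by
    choose f g hadj hmk using fun C : S' => C.2.1
    have hmkg : ∀ E : S', G.connectedComponentMk (g E) = E.1 := fun E =>
      (ConnectedComponent.eq.2 (hadj E).reachable).symm.trans (hmk E)
    have hfr : ∀ C : S', ¬ G.Reachable x₀ (f C) := by
      intro C h
      exact C.2.2 ((hmk C).symm.trans (ConnectedComponent.eq.2 h).symm)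
    have hgr : ∀ C : S', ¬ G.Reachable x₀ (g C) := by
      intro C h
      exact C.2.2 ((hmkg C).symm.trans (ConnectedComponent.eq.2 h).symm)
    have hinj : Nat.card (S' × Bool) ≤ Nat.card {u : Fin n // ¬ G.Reachable x₀ u} := by
      refine Nat.card_le_card_of_injective
        (fun p => if p.2 then ⟨f p.1, hfr p.1⟩ else ⟨g p.1, hgr p.1⟩) ?_
      rintro ⟨C, bC⟩ ⟨D, bD⟩ hCD
      simp only at hCD
      have hval : ∀ (b : Bool) (E : S'),
          G.connectedComponentMk (((if b then (⟨f E, hfr E⟩ : {u : Fin n // ¬ G.Reachable x₀ u})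
            else ⟨g E, hgr E⟩) : {u : Fin n // ¬ G.Reachable x₀ u}) : Fin n) = E.1 := by
        intro b E; cases b
        · simpa using hmkg E
        · simpa using hmk E
      have h1 : C = D := by
        have hc := congrArg (fun z : {u : Fin n // ¬ G.Reachable x₀ u} =>
          G.connectedComponentMk (z : Fin n)) hCD
        exact Subtype.ext ((hval bC C).symm.trans (hc.trans (hval bD D)))
      subst h1
      cases bC <;> cases bD
      · rfl
      · have hcv : g C = f C := by simpa using congrArg Subtype.val hCD
        exact absurd hcv.symm (hadj C).ne
      · have hcv : f C = g C := by simpa using congrArg Subtype.val hCD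
        exact absurd hcv (hadj C).ne
      · rfl
    calc 2 * Nat.card S' = Nat.card S' * 2 := by ring
    _ = Nat.card (S' × Bool) := by simp [Nat.card_prod]
    _ ≤ _ := hinj
  have : numEdgeComps G = Nat.card S := rfl
  omega

lemma three_reps {G : SimpleGraph (Fin n)} (h : 3 ≤ numEdgeComps G) :
    ∃ u1 u2 u3 : Fin n, ¬ G.Reachable u1 u2 ∧ ¬ G.Reachable u1 u3 ∧
      ¬ G.Reachable u2 u3 := by
  classical
  set S := {C : G.ConnectedComponent //
      ∃ u v : Fin n, G.Adj u v ∧ G.connectedComponentMk u = C} with hS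
  have : Fintype S := Fintype.ofFinite S
  have hcard : 2 < Fintype.card S := by
    have : numEdgeComps G = Nat.card S := rfl
    rw [Nat.card_eq_fintype_card] at this
    omega
  rw [← Finset.card_univ, Finset.two_lt_card_iff] at hcard
  obtain ⟨C1, C2, C3, -, -, -, h12, h13, h23⟩ := hcard
  obtain ⟨u1, v1, -, hm1⟩ := C1.2
  obtain ⟨u2, v2, -, hm2⟩ := C2.2
  obtain ⟨u3, v3, -, hm3⟩ := C3.2
  refine ⟨u1, u2, u3, ?_, ?_, ?_⟩ <;> intro hr
  · exact h12 (Subtype.ext (hm1 ▸ hm2 ▸ (ConnectedComponent.eq.2 hr)))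
  · exact h13 (Subtype.ext (hm1 ▸ hm3 ▸ (ConnectedComponent.eq.2 hr)))
  · exact h23 (Subtype.ext (hm2 ▸ hm3 ▸ (ConnectedComponent.eq.2 hr)))

end GraphLemmas

/-- In every 3-edge-coloring of `K_n` (`n ≥ 6`), some used color class
induces a subgraph with at most `⌊n/6⌋ + 1` connected components. -/
theorem f_three_upper (n : ℕ) (hn : 6 ≤ n) (c : Sym2 (Fin n) → Fin 3) :
    ∃ i : Fin 3, usedColor c i ∧ numEdgeComps (colorClass c i) ≤ n / 6 + 1 := by
  classical
  by_contra hcon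
  push_neg at hcon
  have hfin3 : ∀ j : Fin 3, j = 0 ∨ j = 1 ∨ j = 2 := by decide
  have req : ∀ i : Fin 3, Equivalence fun u v : Fin n => (colorClass c i).Reachable u v :=
    fun i => ⟨fun x => SimpleGraph.Reachable.refl x,
      SimpleGraph.Reachable.symm, SimpleGraph.Reachable.trans⟩
  have cov : ∀ u v : Fin n, u ≠ v → (colorClass c 0).Reachable u v ∨
      (colorClass c 1).Reachable u v ∨ (colorClass c 2).Reachable u v := by
    intro u v h
    have hadjR : ∀ i : Fin 3, c s(u,v) = i → (colorClass c i).Reachable u v := fun i hc =>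
      SimpleGraph.Adj.reachable (show (colorClass c i).Adj u v from ⟨h, hc⟩)
    rcases hfin3 (c s(u,v)) with e | e | e
    · exact Or.inl (hadjR 0 e)
    · exact Or.inr (Or.inl (hadjR 1 e))
    · exact Or.inr (Or.inr (hadjR 2 e))
  have cov120 : ∀ u v : Fin n, u ≠ v → (colorClass c 1).Reachable u v ∨
      (colorClass c 2).Reachable u v ∨ (colorClass c 0).Reachable u v := by
    intro u v h; rcases cov u v h with h' | h' | h' <;> tauto
  have cov021 : ∀ u v : Fin n, u ≠ v → (colorClass c 0).Reachable u v ∨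
      (colorClass c 2).Reachable u v ∨ (colorClass c 1).Reachable u v := by
    intro u v h; rcases cov u v h with h' | h' | h' <;> tauto
  have cov102 : ∀ u v : Fin n, u ≠ v → (colorClass c 1).Reachable u v ∨
      (colorClass c 0).Reachable u v ∨ (colorClass c 2).Reachable u v := by
    intro u v h; rcases cov u v h with h' | h' | h' <;> tauto
  have span : ∀ i : Fin 3, (∀ u v : Fin n, (colorClass c i).Reachable u v) → False := by
    intro i hspan
    have hne : (⟨0, by omega⟩ : Fin n) ≠ ⟨1, by omega⟩ := Fin.ne_of_val_ne (by norm_num)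
    obtain ⟨a, b, hab⟩ := reach_adj (hspan ⟨0, by omega⟩ ⟨1, by omega⟩) hne
    have hused : usedColor c i := ⟨a, b, hab.1, hab.2⟩
    have hle := numEdgeComps_le_one (G := colorClass c i) hspan
    have := hcon i hused
    omega
  have notUsed : ∀ i : Fin 3, ¬ usedColor c i →
      ∀ u v : Fin n, u ≠ v → ¬ (colorClass c i).Reachable u v := by
    intro i hi u v hne hr
    obtain ⟨a, b, hab⟩ := reach_adj hr hne
    exact hi ⟨a, b, hab.1, hab.2⟩
  by_cases hu0 : usedColor c 0
  swap
  · have cov2 : ∀ u v : Fin n, u ≠ v → (colorClass c 1).Reachable u v ∨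
        (colorClass c 2).Reachable u v := by
      intro u v h
      rcases cov u v h with hr | hr | hr
      · exact absurd hr (notUsed 0 hu0 u v h)
      · exact Or.inl hr
      · exact Or.inr hr
    rcases twoPart_rel (req 1) (req 2) cov2 ⟨0, by omega⟩ with h | h
    · exact span 1 h
    · exact span 2 h
  by_cases hu1 : usedColor c 1
  swap
  · have cov2 : ∀ u v : Fin n, u ≠ v → (colorClass c 0).Reachable u v ∨
        (colorClass c 2).Reachable u v := by
      intro u v h
      rcases cov u v h with hr | hr | hr
      · exact Or.inl hr
      · exact absurd hr (notUsed 1 hu1 u v h)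
      · exact Or.inr hr
    rcases twoPart_rel (req 0) (req 2) cov2 ⟨0, by omega⟩ with h | h
    · exact span 0 h
    · exact span 2 h
  by_cases hu2 : usedColor c 2
  swap
  · have cov2 : ∀ u v : Fin n, u ≠ v → (colorClass c 0).Reachable u v ∨
        (colorClass c 1).Reachable u v := by
      intro u v h
      rcases cov u v h with hr | hr | hr
      · exact Or.inl hr
      · exact Or.inr hr
      · exact absurd hr (notUsed 2 hu2 u v h)
    rcases twoPart_rel (req 0) (req 1) cov2 ⟨0, by omega⟩ with h | h
    · exact span 0 h
    · exact span 1 h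
  -- all colors used : each has many components
  have hs : ∀ i : Fin 3, n / 6 + 2 ≤ numEdgeComps (colorClass c i) := by
    intro i
    have hu : usedColor c i := by
      rcases hfin3 i with e | e | e <;> rw [e] <;> assumption
    have := hcon i hu
    omega
  have hreps : ∀ i : Fin 3, ∃ u1 u2 u3 : Fin n, ¬ (colorClass c i).Reachable u1 u2 ∧
      ¬ (colorClass c i).Reachable u1 u3 ∧ ¬ (colorClass c i).Reachable u2 u3 := by
    intro i
    refine three_reps ?_
    have := hs i
    omega
  -- disjoint pair for colors (0,1)
  by_cases hm01 : ∀ x y : Fin n, ∃ w, (colorClass c 0).Reachable x w ∧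
      (colorClass c 1).Reachable y w
  · obtain ⟨x1, x2, x3, ha, hb, hc'⟩ := hreps 0
    obtain ⟨y1, y2, y3, hd, he, hf⟩ := hreps 1
    exact span 2 (grid_rel (req 0) (req 1) (req 2) cov hm01 ha hb hc' hd he hf)
  push_neg at hm01
  obtain ⟨a₀, b₀, hd01⟩ := hm01
  have hd01' : ∀ w, (colorClass c 0).Reachable a₀ w → (colorClass c 1).Reachable b₀ w → False :=
    fun w h1 h2 => by have := hd01 w; tauto
  -- disjoint pair for colors (1,2)
  by_cases hm12 : ∀ x y : Fin n, ∃ w, (colorClass c 1).Reachable x w ∧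
      (colorClass c 2).Reachable y w
  · obtain ⟨x1, x2, x3, ha, hb, hc'⟩ := hreps 1
    obtain ⟨y1, y2, y3, hd, he, hf⟩ := hreps 2
    exact span 0 (grid_rel (req 1) (req 2) (req 0) cov120 hm12 ha hb hc' hd he hf)
  push_neg at hm12
  obtain ⟨b₁, c₁, hd12⟩ := hm12
  have hd12' : ∀ w, (colorClass c 1).Reachable b₁ w → (colorClass c 2).Reachable c₁ w → False :=
    fun w h1 h2 => by have := hd12 w; tauto
  -- disjoint pair for colors (0,2)
  by_cases hm02 : ∀ x y : Fin n, ∃ w, (colorClass c 0).Reachable x w ∧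
      (colorClass c 2).Reachable y w
  · obtain ⟨x1, x2, x3, ha, hb, hc'⟩ := hreps 0
    obtain ⟨y1, y2, y3, hd, he, hf⟩ := hreps 2
    exact span 1 (grid_rel (req 0) (req 2) (req 1) cov021 hm02 ha hb hc' hd he hf)
  push_neg at hm02
  obtain ⟨a₂, c₂, hd02⟩ := hm02
  have hd02' : ∀ w, (colorClass c 0).Reachable a₂ w → (colorClass c 2).Reachable c₂ w → False :=
    fun w h1 h2 => by have := hd02 w; tauto
  -- merge facts
  have hX : ∀ w, (colorClass c 1).Reachable b₁ w ∨ (colorClass c 2).Reachable c₁ w →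
      (colorClass c 0).Reachable b₁ w :=
    merge_rel (req 1) (req 2) (req 0) cov120 hd12'
  have hY : ∀ w, (colorClass c 0).Reachable a₂ w ∨ (colorClass c 2).Reachable c₂ w →
      (colorClass c 1).Reachable a₂ w :=
    merge_rel (req 0) (req 2) (req 1) cov021 hd02'
  have hZ : ∀ w, (colorClass c 0).Reachable a₀ w ∨ (colorClass c 1).Reachable b₀ w →
      (colorClass c 2).Reachable a₀ w :=
    merge_rel (req 0) (req 1) (req 2) cov hd01'
  -- the three unions cover everything
  have hXZ : ∀ v, (colorClass c 0).Reachable b₁ v ∨ (colorClass c 2).Reachable a₀ v := by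
    intro v
    by_contra hcontra
    push_neg at hcontra
    obtain ⟨h1, h2⟩ := hcontra
    obtain ⟨w, hw1, hw2⟩ := meets_rel (req 0) (req 1) (req 2) cov hd01' h2 b₁
    exact h1 ((req 0).trans (hX w (Or.inl hw2)) ((req 0).symm hw1))
  have hXY : ∀ v, (colorClass c 0).Reachable b₁ v ∨ (colorClass c 1).Reachable a₂ v := by
    intro v
    by_contra hcontra
    push_neg at hcontra
    obtain ⟨h1, h2⟩ := hcontra
    obtain ⟨w, hw1, hw2⟩ := meets_rel (req 0) (req 2) (req 1) cov021 hd02' h2 c₁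
    exact h1 ((req 0).trans (hX w (Or.inr hw2)) ((req 0).symm hw1))
  have hYZ : ∀ v, (colorClass c 1).Reachable a₂ v ∨ (colorClass c 2).Reachable a₀ v := by
    intro v
    by_contra hcontra
    push_neg at hcontra
    obtain ⟨h1, h2⟩ := hcontra
    have h2' : ¬ (colorClass c 2).Reachable b₀ v := fun hr =>
      h2 ((req 2).trans (hZ b₀ (Or.inr ((req 1).refl b₀))) hr)
    have hd01'' : ∀ w, (colorClass c 1).Reachable b₀ w → (colorClass c 0).Reachable a₀ w →
        False := fun w hb ha => hd01' w ha hb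
    obtain ⟨w, hw1, hw2⟩ := meets_rel (req 1) (req 0) (req 2) cov102 hd01'' h2' a₂
    exact h1 ((req 1).trans (hY w (Or.inl hw2)) ((req 1).symm hw1))
  -- counting
  have hsum : Nat.card {u : Fin n // ¬ (colorClass c 0).Reachable b₁ u}
      + Nat.card {u : Fin n // ¬ (colorClass c 1).Reachable a₂ u}
      + Nat.card {u : Fin n // ¬ (colorClass c 2).Reachable a₀ u} ≤ n := by
    have hinj : Nat.card (({u : Fin n // ¬ (colorClass c 0).Reachable b₁ u}
        ⊕ {u : Fin n // ¬ (colorClass c 1).Reachable a₂ u})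
        ⊕ {u : Fin n // ¬ (colorClass c 2).Reachable a₀ u}) ≤ Nat.card (Fin n) := by
      refine Nat.card_le_card_of_injective
        (fun p => match p with
          | Sum.inl (Sum.inl u) => u.1
          | Sum.inl (Sum.inr u) => u.1
          | Sum.inr u => u.1) ?_
      rintro ((⟨u, hu⟩ | ⟨u, hu⟩) | ⟨u, hu⟩) ((⟨v, hv⟩ | ⟨v, hv⟩) | ⟨v, hv⟩) h <;>
        simp only at h
      · subst h; rfl
      · subst h; exact absurd ((hXY u).resolve_left hu) hv
      · subst h; exact absurd ((hXZ u).resolve_left hu) hv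
      · subst h; exact absurd ((hXY u).resolve_right hu) hv
      · subst h; rfl
      · subst h; exact absurd ((hYZ u).resolve_left hu) hv
      · subst h; exact absurd ((hXZ u).resolve_right hu) hv
      · subst h; exact absurd ((hYZ u).resolve_right hu) hv
      · subst h; rfl
    simpa [Nat.card_sum, Nat.card_eq_fintype_card] using hinj
  have e0 := two_mul_numEdgeComps_le (colorClass c 0) b₁
  have e1 := two_mul_numEdgeComps_le (colorClass c 1) a₂
  have e2 := two_mul_numEdgeComps_le (colorClass c 2) a₀
  have f0 := hs 0
  have f1 := hs 1
  have f2 := hs 2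
  omega
end

section
/- For every n ≥ 2, f_{n-1}(K_n) = ⌊n/2⌋: there exists an (n-1)-edge-coloring of K_n in which every color class has at least ⌊n/2⌋ components, and no coloring can do better. -/
/-! ### Auxiliary lemmas -/

section zmodhelp
variable {N : ℕ}

lemma zcast_inj {a b : ℕ} (ha : a < N) (hb : b < N) (h : (a : ZMod N) = b) : a = b := by
  rw [ZMod.natCast_eq_natCast_iff', Nat.mod_eq_of_lt ha, Nat.mod_eq_of_lt hb] at h
  exact h

lemma zcast_nz [NeZero N] {a : ℕ} (h0 : 0 < a) (h1 : a < N) : (a : ZMod N) ≠ 0 := by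
  intro h
  rw [ZMod.natCast_eq_zero_iff] at h
  exact absurd (Nat.le_of_dvd h0 h) (by omega)

end zmodhelp

section gen
variable {V : Type*} {G : SimpleGraph V} {β : Type*}

lemma phi_walk (φ : V → β) (hφ : ∀ u v, G.Adj u v → φ u = φ v) {u v : V}
    (p : G.Walk u v) : φ u = φ v := by
  induction p with
  | nil => rfl
  | cons h _ ih => exact (hφ _ _ h).trans ih

lemma phi_comp_eq (φ : V → β) (hφ : ∀ u v, G.Adj u v → φ u = φ v) {u v : V}
    (h : G.connectedComponentMk u = G.connectedComponentMk v) : φ u = φ v := by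
  obtain ⟨p⟩ := SimpleGraph.ConnectedComponent.exact h
  exact phi_walk φ hφ p

instance fin_cc {n : ℕ} (G : SimpleGraph (Fin n)) : Finite G.ConnectedComponent :=
  Finite.of_surjective G.connectedComponentMk Quot.mk_surjective

end gen

lemma numEdgeComps_ge {n m : ℕ} (G : SimpleGraph (Fin n)) {β : Type}
    (φ : Fin n → β) (hφ : ∀ u v, G.Adj u v → φ u = φ v)
    (e : Fin m → Fin n × Fin n)
    (he : ∀ t, G.Adj (e t).1 (e t).2)
    (hdist : ∀ t s, φ (e t).1 = φ (e s).1 → t = s) :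
    m ≤ numEdgeComps G := by
  classical
  have hF : Function.Injective (fun t : Fin m =>
      (⟨G.connectedComponentMk (e t).1, (e t).1, (e t).2, he t, rfl⟩ :
        {C : G.ConnectedComponent //
          ∃ u v : Fin n, G.Adj u v ∧ G.connectedComponentMk u = C})) := by
    intro t s h
    apply hdist
    exact phi_comp_eq φ hφ (congrArg Subtype.val h)
  have := Nat.card_le_card_of_injective _ hF
  simpa [numEdgeComps] using this

lemma numEdgeComps_le {n : ℕ} (G : SimpleGraph (Fin n)) : numEdgeComps G ≤ n / 2 := by
  classical
  set S := {C : G.ConnectedComponent //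
      ∃ u v : Fin n, G.Adj u v ∧ G.connectedComponentMk u = C} with hS
  have hw : ∀ C : S, ∃ p : Fin n × Fin n, G.Adj p.1 p.2 ∧
      G.connectedComponentMk p.1 = C.1 ∧ G.connectedComponentMk p.2 = C.1 := by
    rintro ⟨C, u, v, hadj, hu⟩
    refine ⟨(u, v), hadj, hu, ?_⟩
    show G.connectedComponentMk v = C
    rw [← hu]
    exact SimpleGraph.ConnectedComponent.connectedComponentMk_eq_of_adj hadj.symm
  choose p hp1 hp2 hp3 using hw
  have hinj : Function.Injective (fun x : S × Bool => if x.2 then (p x.1).1 else (p x.1).2) := by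
    rintro ⟨C, b⟩ ⟨D, b'⟩ h
    simp only at h
    have hCD : C = D := by
      apply Subtype.ext
      rcases b <;> rcases b' <;> simp at h <;>
        [ (rw [← hp3 C, ← hp3 D, h]); (rw [← hp3 C, ← hp2 D, h]);
          (rw [← hp2 C, ← hp3 D, h]); (rw [← hp2 C, ← hp2 D, h])]
    subst hCD
    have hne : (p C).1 ≠ (p C).2 := (hp1 C).ne
    rcases b <;> rcases b' <;> simp_all
  have hcard := Nat.card_le_card_of_injective _ hinj
  rw [Nat.card_prod] at hcard
  simp only [Nat.card_eq_fintype_card, Fintype.card_bool, Fintype.card_fin] at hcard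
  rw [Nat.le_div_iff_mul_le (by norm_num)]
  show Nat.card S * 2 ≤ n
  rw [Nat.card_eq_fintype_card]
  exact hcard

/-! ### The explicit coloring -/

def mycfun (n a b : ℕ) : ℕ :=
  if a = n - 1 then 2 * b else if b = n - 1 then 2 * a else a + b

lemma mycfun_symm (n a b : ℕ) : mycfun n a b = mycfun n b a := by
  unfold mycfun; split_ifs <;> omega

def myc (n : ℕ) (hn : 2 ≤ n) : Sym2 (Fin n) → Fin (n - 1) :=
  Sym2.lift ⟨fun a b => ⟨mycfun n a.val b.val % (n - 1), Nat.mod_lt _ (by omega)⟩,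
    fun a b => Fin.ext (by simp only []; rw [mycfun_symm])⟩

lemma myc_val {n : ℕ} (hn : 2 ≤ n) (u v : Fin n) :
    (myc n hn s(u, v)).val = mycfun n u.val v.val % (n - 1) := rfl

lemma adj_iff {n : ℕ} (hn : 2 ≤ n) (i : Fin (n - 1)) (u v : Fin n) :
    (colorClass (myc n hn) i).Adj u v ↔
      u ≠ v ∧ ((mycfun n u.val v.val : ℕ) : ZMod (n - 1)) = ((i.val : ℕ) : ZMod (n - 1)) := by
  show (u ≠ v ∧ myc n hn s(u, v) = i) ↔ _
  constructor
  · rintro ⟨hne, hc⟩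
    refine ⟨hne, ?_⟩
    have hv := congrArg Fin.val hc
    rw [myc_val hn] at hv
    rw [ZMod.natCast_eq_natCast_iff', Nat.mod_eq_of_lt i.isLt]
    exact hv
  · rintro ⟨hne, hc⟩
    refine ⟨hne, ?_⟩
    apply Fin.ext
    rw [myc_val hn]
    rw [ZMod.natCast_eq_natCast_iff', Nat.mod_eq_of_lt i.isLt] at hc
    exact hc

lemma construction_even {n : ℕ} (hn : 2 ≤ n) (hpar : n % 2 = 0) (i : Fin (n - 1)) :
    n / 2 ≤ numEdgeComps (colorClass (myc n hn) i) := by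
  obtain ⟨m, hm⟩ : ∃ m, n = 2 * m := ⟨n / 2, by omega⟩
  have hm1 : 1 ≤ m := by omega
  haveI : NeZero (n - 1) := ⟨by omega⟩
  set i' : ZMod (n - 1) := ((i.val : ℕ) : ZMod (n - 1)) with hi'
  have key : (2 : ZMod (n - 1)) * ((m : ℕ) : ZMod (n - 1)) = 1 := by
    have h2m : 2 * m = (n - 1) + 1 := by omega
    calc (2 : ZMod (n - 1)) * ((m : ℕ) : ZMod (n - 1)) = ((2 * m : ℕ) : ZMod (n - 1)) := by
          push_cast; ring
    _ = (((n - 1) + 1 : ℕ) : ZMod (n - 1)) := by rw [h2m]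
    _ = 1 := by push_cast [ZMod.natCast_self]; ring
  set x : ZMod (n - 1) := ((m : ℕ) : ZMod (n - 1)) * i' with hx
  have h2x : 2 * x = i' := by
    rw [hx]
    calc (2 : ZMod (n - 1)) * (((m : ℕ) : ZMod (n - 1)) * i')
        = ((2 : ZMod (n - 1)) * (m : ℕ)) * i' := by ring
    _ = i' := by rw [key, one_mul]
  set φ : Fin n → Sym2 (ZMod (n - 1)) := fun v =>
    if v.val = n - 1 then s(x, x)
    else s(((v.val : ℕ) : ZMod (n - 1)), i' - ((v.val : ℕ) : ZMod (n - 1)))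
    with hφdef
  have hφ : ∀ u v, (colorClass (myc n hn) i).Adj u v → φ u = φ v := by
    intro u v hadj
    rw [adj_iff hn] at hadj
    obtain ⟨hne, hc⟩ := hadj
    unfold mycfun at hc
    split_ifs at hc with h1 h2
    · -- u.val = n - 1
      have hvN : v.val ≠ n - 1 := fun h => hne (Fin.ext (by omega))
      push_cast at hc
      have hveq : ((v.val : ℕ) : ZMod (n - 1)) = x := by
        rw [hx]
        linear_combination ((m : ℕ) : ZMod (n - 1)) * hc - ((v.val : ℕ) : ZMod (n - 1)) * key
      simp only [hφdef]
      rw [if_pos h1, if_neg hvN, hveq,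
        show i' - x = x from by linear_combination (-1 : ZMod (n - 1)) * h2x]
    · -- v.val = n - 1
      push_cast at hc
      have hueq : ((u.val : ℕ) : ZMod (n - 1)) = x := by
        rw [hx]
        linear_combination ((m : ℕ) : ZMod (n - 1)) * hc - ((u.val : ℕ) : ZMod (n - 1)) * key
      simp only [hφdef]
      rw [if_neg h1, if_pos h2, hueq,
        show i' - x = x from by linear_combination (-1 : ZMod (n - 1)) * h2x]
    · push_cast at hc
      simp only [hφdef]
      rw [if_neg h1, if_neg h2]
      have e1 : ((v.val : ℕ) : ZMod (n - 1)) = i' - ((u.val : ℕ) : ZMod (n - 1)) := by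
        linear_combination hc
      rw [e1, sub_sub_cancel]
      exact Sym2.eq_swap
  have hvlt : ∀ z : ZMod (n - 1), z.val < n := fun z => lt_of_lt_of_le (ZMod.val_lt z) (by omega)
  set e : Fin m → Fin n × Fin n := fun t =>
    if t.val = 0 then (⟨n - 1, by omega⟩, ⟨x.val, hvlt x⟩)
    else (⟨(x + ((t.val : ℕ) : ZMod (n - 1))).val, hvlt _⟩,
          ⟨(x - ((t.val : ℕ) : ZMod (n - 1))).val, hvlt _⟩)
    with he_def
  have he : ∀ t, (colorClass (myc n hn) i).Adj (e t).1 (e t).2 := by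
    intro t
    rw [adj_iff hn]
    by_cases ht : t.val = 0
    · simp only [he_def, if_pos ht]
      constructor
      · intro h
        have hv := congrArg Fin.val h
        simp only [] at hv
        have := ZMod.val_lt x
        omega
      · show ((mycfun n (n - 1) x.val : ℕ) : ZMod (n - 1)) = i'
        unfold mycfun
        rw [if_pos rfl]
        push_cast
        rw [ZMod.natCast_zmod_val]
        exact h2x
    · simp only [he_def, if_neg ht]
      have hlt1 := ZMod.val_lt (x + ((t.val : ℕ) : ZMod (n - 1)))
      have hlt2 := ZMod.val_lt (x - ((t.val : ℕ) : ZMod (n - 1)))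
      have htm := t.isLt
      constructor
      · intro h
        have hv := congrArg Fin.val h
        simp only [] at hv
        have hzz : x + ((t.val : ℕ) : ZMod (n - 1)) = x - ((t.val : ℕ) : ZMod (n - 1)) :=
          ZMod.val_injective _ hv
        have hz : ((2 * t.val : ℕ) : ZMod (n - 1)) = 0 := by
          push_cast
          linear_combination hzz
        exact zcast_nz (by omega) (by omega) hz
      · show ((mycfun n _ _ : ℕ) : ZMod (n - 1)) = i'
        unfold mycfun
        rw [if_neg (by omega), if_neg (by omega)]
        push_cast
        rw [ZMod.natCast_zmod_val, ZMod.natCast_zmod_val]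
        linear_combination h2x
  have hdist : ∀ t s, φ (e t).1 = φ (e s).1 → t = s := by
    have hval1 : ∀ t : Fin m, t.val ≠ 0 →
        φ (e t).1 = s(x + ((t.val : ℕ) : ZMod (n - 1)), x - ((t.val : ℕ) : ZMod (n - 1))) := by
      intro t ht
      simp only [he_def, if_neg ht, hφdef]
      have hlt1 := ZMod.val_lt (x + ((t.val : ℕ) : ZMod (n - 1)))
      rw [if_neg (by omega), ZMod.natCast_zmod_val,
        show i' - (x + ((t.val : ℕ) : ZMod (n - 1))) = x - ((t.val : ℕ) : ZMod (n - 1)) from by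
          linear_combination (-1 : ZMod (n - 1)) * h2x]
    have hval0 : ∀ t : Fin m, t.val = 0 → φ (e t).1 = s(x, x) := by
      intro t ht
      simp only [he_def, if_pos ht, hφdef]
      simp
    intro t s h
    by_cases ht : t.val = 0 <;> by_cases hs : s.val = 0
    · exact Fin.ext (by omega)
    · rw [hval0 t ht, hval1 s hs] at h
      exfalso
      have htm := s.isLt
      rcases Sym2.eq_iff.mp h with ⟨h1, h2⟩ | ⟨h1, h2⟩
      · have hz : ((s.val : ℕ) : ZMod (n - 1)) = 0 := by
          linear_combination (-1 : ZMod (n - 1)) * h1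
        exact zcast_nz (by omega) (by omega) hz
      · have hz : ((s.val : ℕ) : ZMod (n - 1)) = 0 := by linear_combination h1
        exact zcast_nz (by omega) (by omega) hz
    · rw [hval1 t ht, hval0 s hs] at h
      exfalso
      have htm := t.isLt
      rcases Sym2.eq_iff.mp h with ⟨h1, h2⟩ | ⟨h1, h2⟩
      · have hz : ((t.val : ℕ) : ZMod (n - 1)) = 0 := by linear_combination h1
        exact zcast_nz (by omega) (by omega) hz
      · have hz : ((t.val : ℕ) : ZMod (n - 1)) = 0 := by linear_combination h1
        exact zcast_nz (by omega) (by omega) hz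
    · rw [hval1 t ht, hval1 s hs] at h
      have htm := t.isLt
      have hsm := s.isLt
      rcases Sym2.eq_iff.mp h with ⟨h1, h2⟩ | ⟨h1, h2⟩
      · have hz : ((t.val : ℕ) : ZMod (n - 1)) = ((s.val : ℕ) : ZMod (n - 1)) := by
          linear_combination h1
        exact Fin.ext (zcast_inj (by omega) (by omega) hz)
      · exfalso
        have hz : ((t.val + s.val : ℕ) : ZMod (n - 1)) = 0 := by
          push_cast
          linear_combination h1
        exact zcast_nz (by omega) (by omega) hz
  have hfin := numEdgeComps_ge (colorClass (myc n hn) i) φ hφ e he hdist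
  omega

lemma two_mul_eq_zero {N m : ℕ} (hm : 1 ≤ m) (hN : N = 2 * m) {z : ZMod N} (h : 2 * z = 0) :
    z = 0 ∨ z = ((m : ℕ) : ZMod N) := by
  subst hN
  haveI : NeZero (2 * m) := ⟨by omega⟩
  have hz : ((2 * z.val : ℕ) : ZMod (2 * m)) = 0 := by
    push_cast
    rw [ZMod.natCast_zmod_val]
    exact h
  rw [ZMod.natCast_eq_zero_iff] at hz
  obtain ⟨c, hcc⟩ := hz
  have hv := ZMod.val_lt z
  have hcle : c ≤ 1 := by
    by_contra hc2
    push_neg at hc2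
    have : 2 * m * 2 ≤ 2 * m * c := Nat.mul_le_mul_left _ hc2
    omega
  have hzv : z.val = 0 ∨ z.val = m := by interval_cases c <;> omega
  rcases hzv with h0 | h0
  · left
    rw [← ZMod.natCast_zmod_val z, h0, Nat.cast_zero]
  · right
    rw [← ZMod.natCast_zmod_val z, h0]

lemma construction_odd {n : ℕ} (hn : 2 ≤ n) (hpar : n % 2 = 1) (i : Fin (n - 1)) :
    n / 2 ≤ numEdgeComps (colorClass (myc n hn) i) := by
  obtain ⟨m, hm⟩ : ∃ m, n = 2 * m + 1 := ⟨n / 2, by omega⟩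
  have hm1 : 1 ≤ m := by omega
  have hn2m : n - 1 = 2 * m := by omega
  haveI : NeZero (n - 1) := ⟨by omega⟩
  set i' : ZMod (n - 1) := ((i.val : ℕ) : ZMod (n - 1)) with hi'
  have hilt := i.isLt
  have hvlt : ∀ z : ZMod (n - 1), z.val < n := fun z => lt_of_lt_of_le (ZMod.val_lt z) (by omega)
  have h2m0 : ((m : ℕ) : ZMod (n - 1)) + ((m : ℕ) : ZMod (n - 1)) = 0 := by
    have : (((2 * m : ℕ)) : ZMod (n - 1)) = 0 := by
      rw [← hn2m, ZMod.natCast_self]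
    push_cast at this
    linear_combination this
  rcases Nat.even_or_odd i.val with ⟨k, hk⟩ | ⟨k, hk⟩
  · -- i.val = k + k : even color
    have hkm : k < m := by omega
    set k' : ZMod (n - 1) := ((k : ℕ) : ZMod (n - 1)) with hk'
    have hi2 : i' = 2 * k' := by
      rw [hi', hk']
      rw [show (i.val : ℕ) = 2 * k from by omega]
      push_cast
      ring
    set φ : Fin n → Sym2 (ZMod (n - 1)) := fun v =>
      if v.val = n - 1 ∨ ((v.val : ℕ) : ZMod (n - 1)) = k'
          ∨ ((v.val : ℕ) : ZMod (n - 1)) = k' + ((m : ℕ) : ZMod (n - 1)) then s(k', k')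
      else s(((v.val : ℕ) : ZMod (n - 1)), i' - ((v.val : ℕ) : ZMod (n - 1)))
      with hφdef
    have hφ : ∀ u v, (colorClass (myc n hn) i).Adj u v → φ u = φ v := by
      intro u v hadj
      rw [adj_iff hn] at hadj
      obtain ⟨hne, hc⟩ := hadj
      unfold mycfun at hc
      split_ifs at hc with h1 h2
      · -- u.val = n - 1
        have hvN : v.val ≠ n - 1 := fun h => hne (Fin.ext (by omega))
        push_cast at hc
        have hker : 2 * (((v.val : ℕ) : ZMod (n - 1)) - k') = 0 := by
          linear_combination hc + hi2
        rcases two_mul_eq_zero hm1 hn2m hker with h0 | h0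
        · simp only [hφdef]
          rw [if_pos (Or.inl h1), if_pos (Or.inr (Or.inl (by linear_combination h0)))]
        · simp only [hφdef]
          rw [if_pos (Or.inl h1), if_pos (Or.inr (Or.inr (by linear_combination h0)))]
      · -- v.val = n - 1
        push_cast at hc
        have hker : 2 * (((u.val : ℕ) : ZMod (n - 1)) - k') = 0 := by
          linear_combination hc + hi2
        rcases two_mul_eq_zero hm1 hn2m hker with h0 | h0
        · simp only [hφdef]
          rw [if_pos (Or.inl h2), if_pos (Or.inr (Or.inl (by linear_combination h0)))]
        · simp only [hφdef]
          rw [if_pos (Or.inl h2), if_pos (Or.inr (Or.inr (by linear_combination h0)))]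
      · push_cast at hc
        have hult : u.val < n - 1 := by have := u.isLt; omega
        have hvlt' : v.val < n - 1 := by have := v.isLt; omega
        have hunspec : ¬(u.val = n - 1 ∨ ((u.val : ℕ) : ZMod (n - 1)) = k'
            ∨ ((u.val : ℕ) : ZMod (n - 1)) = k' + ((m : ℕ) : ZMod (n - 1))) := by
          rintro (h | h | h)
          · exact h1 h
          · have hveq : ((v.val : ℕ) : ZMod (n - 1)) = ((u.val : ℕ) : ZMod (n - 1)) := by
              linear_combination hc - 2 * h + hi2
            exact hne (Fin.ext (zcast_inj hvlt' hult hveq).symm)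
          · have hveq : ((v.val : ℕ) : ZMod (n - 1)) = ((u.val : ℕ) : ZMod (n - 1)) := by
              linear_combination hc - 2 * h + hi2 - h2m0
            exact hne (Fin.ext (zcast_inj hvlt' hult hveq).symm)
        have hvnspec : ¬(v.val = n - 1 ∨ ((v.val : ℕ) : ZMod (n - 1)) = k'
            ∨ ((v.val : ℕ) : ZMod (n - 1)) = k' + ((m : ℕ) : ZMod (n - 1))) := by
          rintro (h | h | h)
          · exact h2 h
          · have hueq : ((u.val : ℕ) : ZMod (n - 1)) = ((v.val : ℕ) : ZMod (n - 1)) := by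
              linear_combination hc - 2 * h + hi2
            exact hne (Fin.ext (zcast_inj hult hvlt' hueq))
          · have hueq : ((u.val : ℕ) : ZMod (n - 1)) = ((v.val : ℕ) : ZMod (n - 1)) := by
              linear_combination hc - 2 * h + hi2 - h2m0
            exact hne (Fin.ext (zcast_inj hult hvlt' hueq))
        simp only [hφdef]
        rw [if_neg hunspec, if_neg hvnspec]
        have e1 : ((v.val : ℕ) : ZMod (n - 1)) = i' - ((u.val : ℕ) : ZMod (n - 1)) := by
          linear_combination hc
        rw [e1, sub_sub_cancel]
        exact Sym2.eq_swap
    set e : Fin m → Fin n × Fin n := fun t =>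
      if t.val = 0 then (⟨n - 1, by omega⟩, ⟨k, by omega⟩)
      else (⟨(k' + ((t.val : ℕ) : ZMod (n - 1))).val, hvlt _⟩,
            ⟨(k' - ((t.val : ℕ) : ZMod (n - 1))).val, hvlt _⟩)
      with he_def
    have he : ∀ t, (colorClass (myc n hn) i).Adj (e t).1 (e t).2 := by
      intro t
      rw [adj_iff hn]
      by_cases ht : t.val = 0
      · simp only [he_def, if_pos ht]
        constructor
        · intro h
          have hv := congrArg Fin.val h
          simp only [] at hv
          omega
        · show ((mycfun n (n - 1) k : ℕ) : ZMod (n - 1)) = i'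
          unfold mycfun
          rw [if_pos rfl, hi', show (i.val : ℕ) = 2 * k from by omega]
      · simp only [he_def, if_neg ht]
        have hlt1 := ZMod.val_lt (k' + ((t.val : ℕ) : ZMod (n - 1)))
        have hlt2 := ZMod.val_lt (k' - ((t.val : ℕ) : ZMod (n - 1)))
        have htm := t.isLt
        constructor
        · intro h
          have hv := congrArg Fin.val h
          simp only [] at hv
          have hzz : k' + ((t.val : ℕ) : ZMod (n - 1)) = k' - ((t.val : ℕ) : ZMod (n - 1)) :=
            ZMod.val_injective _ hv
          have hz : ((2 * t.val : ℕ) : ZMod (n - 1)) = 0 := by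
            push_cast
            linear_combination hzz
          exact zcast_nz (by omega) (by omega) hz
        · show ((mycfun n _ _ : ℕ) : ZMod (n - 1)) = i'
          unfold mycfun
          rw [if_neg (by omega), if_neg (by omega)]
          push_cast
          rw [ZMod.natCast_zmod_val, ZMod.natCast_zmod_val]
          linear_combination (-1 : ZMod (n - 1)) * hi2
    have hdist : ∀ t s, φ (e t).1 = φ (e s).1 → t = s := by
      have hval1 : ∀ t : Fin m, t.val ≠ 0 →
          φ (e t).1 = s(k' + ((t.val : ℕ) : ZMod (n - 1)), k' - ((t.val : ℕ) : ZMod (n - 1))) := by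
        intro t ht
        have htm := t.isLt
        simp only [he_def, if_neg ht, hφdef]
        have hlt1 := ZMod.val_lt (k' + ((t.val : ℕ) : ZMod (n - 1)))
        have hnspec : ¬((k' + ((t.val : ℕ) : ZMod (n - 1))).val = n - 1
            ∨ (((k' + ((t.val : ℕ) : ZMod (n - 1))).val : ℕ) : ZMod (n - 1)) = k'
            ∨ (((k' + ((t.val : ℕ) : ZMod (n - 1))).val : ℕ) : ZMod (n - 1))
              = k' + ((m : ℕ) : ZMod (n - 1))) := by
          rw [ZMod.natCast_zmod_val]
          rintro (h | h | h)
          · omega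
          · have hz : ((t.val : ℕ) : ZMod (n - 1)) = 0 := by linear_combination h
            exact zcast_nz (by omega) (by omega) hz
          · have hz : ((t.val : ℕ) : ZMod (n - 1)) = ((m : ℕ) : ZMod (n - 1)) := by
              linear_combination h
            have := zcast_inj (by omega) (by omega) hz
            omega
        rw [if_neg hnspec, ZMod.natCast_zmod_val,
          show i' - (k' + ((t.val : ℕ) : ZMod (n - 1))) = k' - ((t.val : ℕ) : ZMod (n - 1)) from by
            linear_combination hi2]
      have hval0 : ∀ t : Fin m, t.val = 0 → φ (e t).1 = s(k', k') := by
        intro t ht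
        simp only [he_def, if_pos ht, hφdef]
        simp
      intro t s h
      by_cases ht : t.val = 0 <;> by_cases hs : s.val = 0
      · exact Fin.ext (by omega)
      · rw [hval0 t ht, hval1 s hs] at h
        exfalso
        have hsm := s.isLt
        rcases Sym2.eq_iff.mp h with ⟨h1, h2⟩ | ⟨h1, h2⟩
        · have hz : ((s.val : ℕ) : ZMod (n - 1)) = 0 := by
            linear_combination (-1 : ZMod (n - 1)) * h1
          exact zcast_nz (by omega) (by omega) hz
        · have hz : ((s.val : ℕ) : ZMod (n - 1)) = 0 := by linear_combination h1
          exact zcast_nz (by omega) (by omega) hz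
      · rw [hval1 t ht, hval0 s hs] at h
        exfalso
        have htm := t.isLt
        rcases Sym2.eq_iff.mp h with ⟨h1, h2⟩ | ⟨h1, h2⟩
        · have hz : ((t.val : ℕ) : ZMod (n - 1)) = 0 := by linear_combination h1
          exact zcast_nz (by omega) (by omega) hz
        · have hz : ((t.val : ℕ) : ZMod (n - 1)) = 0 := by linear_combination h1
          exact zcast_nz (by omega) (by omega) hz
      · rw [hval1 t ht, hval1 s hs] at h
        have htm := t.isLt
        have hsm := s.isLt
        rcases Sym2.eq_iff.mp h with ⟨h1, h2⟩ | ⟨h1, h2⟩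
        · have hz : ((t.val : ℕ) : ZMod (n - 1)) = ((s.val : ℕ) : ZMod (n - 1)) := by
            linear_combination h1
          exact Fin.ext (zcast_inj (by omega) (by omega) hz)
        · exfalso
          have hz : ((t.val + s.val : ℕ) : ZMod (n - 1)) = 0 := by
            push_cast
            linear_combination h1
          exact zcast_nz (by omega) (by omega) hz
    have hfin := numEdgeComps_ge (colorClass (myc n hn) i) φ hφ e he hdist
    omega
  · -- i.val = 2 * k + 1 : odd color
    have hkm : k < m := by omega
    set k' : ZMod (n - 1) := ((k : ℕ) : ZMod (n - 1)) with hk'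
    have hi2 : i' = 2 * k' + 1 := by
      rw [hi', hk', hk]
      push_cast
      ring
    set φ : Fin n → Sym2 (ZMod (n - 1)) := fun v =>
      if v.val = n - 1 then s(k', k')
      else s(((v.val : ℕ) : ZMod (n - 1)), i' - ((v.val : ℕ) : ZMod (n - 1)))
      with hφdef
    have hpar2 : ∀ a : ℕ, ((2 * a : ℕ) : ZMod (n - 1)) = ((i.val : ℕ) : ZMod (n - 1)) → False := by
      intro a ha
      rw [ZMod.natCast_eq_natCast_iff'] at ha
      have ha' : 2 * a % (2 * m) = i.val % (2 * m) := by rw [← hn2m]; exact ha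
      have him : i.val % (2 * m) = i.val := Nat.mod_eq_of_lt (by omega)
      rw [Nat.mul_mod_mul_left, him] at ha'
      omega
    have hφ : ∀ u v, (colorClass (myc n hn) i).Adj u v → φ u = φ v := by
      intro u v hadj
      rw [adj_iff hn] at hadj
      obtain ⟨hne, hc⟩ := hadj
      unfold mycfun at hc
      split_ifs at hc with h1 h2
      · exact absurd hc (fun hcc => hpar2 _ hcc)
      · exact absurd hc (fun hcc => hpar2 _ hcc)
      · push_cast at hc
        simp only [hφdef]
        rw [if_neg h1, if_neg h2]
        have e1 : ((v.val : ℕ) : ZMod (n - 1)) = i' - ((u.val : ℕ) : ZMod (n - 1)) := by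
          linear_combination hc
        rw [e1, sub_sub_cancel]
        exact Sym2.eq_swap
    set e : Fin m → Fin n × Fin n := fun t =>
      (⟨(k' + 1 + ((t.val : ℕ) : ZMod (n - 1))).val, hvlt _⟩,
       ⟨(k' - ((t.val : ℕ) : ZMod (n - 1))).val, hvlt _⟩)
      with he_def
    have he : ∀ t, (colorClass (myc n hn) i).Adj (e t).1 (e t).2 := by
      intro t
      rw [adj_iff hn]
      simp only [he_def]
      have hlt1 := ZMod.val_lt (k' + 1 + ((t.val : ℕ) : ZMod (n - 1)))
      have hlt2 := ZMod.val_lt (k' - ((t.val : ℕ) : ZMod (n - 1)))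
      have htm := t.isLt
      constructor
      · intro h
        have hv := congrArg Fin.val h
        simp only [] at hv
        have hzz : k' + 1 + ((t.val : ℕ) : ZMod (n - 1)) = k' - ((t.val : ℕ) : ZMod (n - 1)) :=
          ZMod.val_injective _ hv
        have hz : ((2 * t.val + 1 : ℕ) : ZMod (n - 1)) = 0 := by
          push_cast
          linear_combination hzz
        rw [ZMod.natCast_eq_zero_iff] at hz
        have h2dvd : 2 ∣ 2 * t.val + 1 := dvd_trans ⟨m, hn2m⟩ hz
        omega
      · show ((mycfun n _ _ : ℕ) : ZMod (n - 1)) = i'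
        unfold mycfun
        rw [if_neg (by omega), if_neg (by omega)]
        push_cast
        rw [ZMod.natCast_zmod_val, ZMod.natCast_zmod_val]
        linear_combination (-1 : ZMod (n - 1)) * hi2
    have hdist : ∀ t s, φ (e t).1 = φ (e s).1 → t = s := by
      have hval1 : ∀ t : Fin m,
          φ (e t).1 = s(k' + 1 + ((t.val : ℕ) : ZMod (n - 1)),
            k' - ((t.val : ℕ) : ZMod (n - 1))) := by
        intro t
        have htm := t.isLt
        simp only [he_def, hφdef]
        have hlt1 := ZMod.val_lt (k' + 1 + ((t.val : ℕ) : ZMod (n - 1)))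
        rw [if_neg (by omega), ZMod.natCast_zmod_val,
          show i' - (k' + 1 + ((t.val : ℕ) : ZMod (n - 1)))
              = k' - ((t.val : ℕ) : ZMod (n - 1)) from by
            linear_combination hi2]
      intro t s h
      rw [hval1 t, hval1 s] at h
      have htm := t.isLt
      have hsm := s.isLt
      rcases Sym2.eq_iff.mp h with ⟨h1, h2⟩ | ⟨h1, h2⟩
      · have hz : ((t.val : ℕ) : ZMod (n - 1)) = ((s.val : ℕ) : ZMod (n - 1)) := by
          linear_combination h1
        exact Fin.ext (zcast_inj (by omega) (by omega) hz)
      · exfalso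
        have hz : ((t.val + s.val + 1 : ℕ) : ZMod (n - 1)) = 0 := by
          push_cast
          linear_combination h1
        exact zcast_nz (by omega) (by omega) hz
    have hfin := numEdgeComps_ge (colorClass (myc n hn) i) φ hφ e he hdist
    omega

lemma construction_all {n : ℕ} (hn : 2 ≤ n) (i : Fin (n - 1)) :
    n / 2 ≤ numEdgeComps (colorClass (myc n hn) i) := by
  rcases Nat.even_or_odd n with h | h
  · exact construction_even hn (Nat.even_iff.mp h) i
  · exact construction_odd hn (Nat.odd_iff.mp h) i

/-- For every `n ≥ 2`, `f_{n-1}(K_n) = ⌊n/2⌋`: there exists an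
`(n-1)`-edge-coloring of `K_n` in which every color class has at least
`⌊n/2⌋` components, and no coloring can do better. -/
theorem f_nsub1_Kn (n : ℕ) (hn : 2 ≤ n) :
    fGraph n (n - 1) = n / 2 ∧
    (∃ c : Sym2 (Fin n) → Fin (n - 1), ∀ i : Fin (n - 1),
      n / 2 ≤ numEdgeComps (colorClass c i)) := by
  have hne01 : (⟨0, by omega⟩ : Fin n) ≠ ⟨1, by omega⟩ := by
    intro h
    have := congrArg Fin.val h
    simp at this
  have hub : ∀ c : Sym2 (Fin n) → Fin (n - 1), minComps c ≤ n / 2 := by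
    intro c
    have hmem : numEdgeComps (colorClass c (c s(⟨0, by omega⟩, ⟨1, by omega⟩)))
        ∈ (fun i => numEdgeComps (colorClass c i)) '' {i | usedColor c i} :=
      ⟨c s(⟨0, by omega⟩, ⟨1, by omega⟩),
        ⟨⟨0, by omega⟩, ⟨1, by omega⟩, hne01, rfl⟩, rfl⟩
    exact le_trans (Nat.sInf_le hmem) (numEdgeComps_le _)
  have hlb : n / 2 ≤ minComps (myc n hn) := by
    apply le_csInf
    · exact ⟨numEdgeComps (colorClass (myc n hn) (myc n hn s(⟨0, by omega⟩, ⟨1, by omega⟩))),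
        myc n hn s(⟨0, by omega⟩, ⟨1, by omega⟩),
        ⟨⟨0, by omega⟩, ⟨1, by omega⟩, hne01, rfl⟩, rfl⟩
    · rintro b ⟨j, hj, rfl⟩
      exact construction_all hn j
  constructor
  · apply le_antisymm
    · refine csSup_le ⟨minComps (myc n hn), ⟨myc n hn, rfl⟩⟩ ?_
      rintro b ⟨c, rfl⟩
      exact hub c
    · refine le_trans hlb (le_csSup ⟨n / 2, ?_⟩ ⟨myc n hn, rfl⟩)
      rintro b ⟨c, rfl⟩
      exact hub c
  · exact ⟨myc n hn, fun i => construction_all hn i⟩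
end
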